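/- arXiv:1205.3957 — 5 statements merged into one kernel-verified Lean document; each statement's English description precedes it below -/
import Mathlib

section
/- Let λ, ν > −1. Then there exist constants 0 < c ≤ C < ∞, depending only on λ and ν, such that for every interval I = (a,b) with 0 ≤ a < b ≤ π: c · (b−a) · b^{λ} · (π−a)^{ν} ≤ ∫_a^b θ^{λ} (π−θ)^{ν} dθ ≤ C · (b−a) · b^{λ} · (π−a)^{ν}. -/
open Real MeasureTheory

lemma rpow_sandwich {r u x K : ℝ} (hu : 0 < u) (hK : 1 ≤ K) (h1 : u / K ≤ x) (h2 : x ≤ u) :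
    K ^ (-|r|) * u ^ r ≤ x ^ r ∧ x ^ r ≤ K ^ |r| * u ^ r := by
  have hK0 : 0 < K := lt_of_lt_of_le one_pos hK
  have hx : 0 < x := lt_of_lt_of_le (div_pos hu hK0) h1
  have hdiv : (u / K) ^ r = K ^ (-r) * u ^ r := by
    rw [Real.div_rpow hu.le hK0.le, Real.rpow_neg hK0.le]
    ring
  have hur : 0 ≤ u ^ r := Real.rpow_nonneg hu.le r
  rcases le_or_gt 0 r with hr | hr
  · rw [abs_of_nonneg hr]
    constructor
    · calc K ^ (-r) * u ^ r = (u / K) ^ r := hdiv.symm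
        _ ≤ x ^ r := Real.rpow_le_rpow (div_pos hu hK0).le h1 hr
    · calc x ^ r ≤ u ^ r := Real.rpow_le_rpow hx.le h2 hr
        _ ≤ K ^ r * u ^ r := le_mul_of_one_le_left hur (Real.one_le_rpow hK hr)
  · rw [abs_of_neg hr]
    constructor
    · calc K ^ (-(-r)) * u ^ r = K ^ r * u ^ r := by rw [neg_neg]
        _ ≤ 1 * u ^ r := by
            exact mul_le_mul_of_nonneg_right
              (Real.rpow_le_one_of_one_le_of_nonpos hK hr.le) hur
        _ = u ^ r := one_mul _
        _ ≤ x ^ r := Real.rpow_le_rpow_of_nonpos hx h2 hr.le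
    · calc x ^ r ≤ (u / K) ^ r := Real.rpow_le_rpow_of_nonpos (div_pos hu hK0) h1 hr.le
        _ = K ^ (-r) * u ^ r := hdiv

lemma oneD_upper {lam : ℝ} (hlam : -1 < lam) :
    ∃ C : ℝ, 1 ≤ C ∧ ∀ a b : ℝ, 0 ≤ a → a < b →
      (∫ x in a..b, x ^ lam) ≤ C * ((b - a) * b ^ lam) := by
  have hl1 : 0 < lam + 1 := by linarith
  refine ⟨max 1 (max ((2:ℝ) ^ (-lam)) (2 / (lam + 1))), le_max_left _ _, ?_⟩
  intro a b ha hab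
  have hb : 0 < b := lt_of_le_of_lt ha hab
  have hblam : 0 ≤ b ^ lam := Real.rpow_nonneg hb.le lam
  have hba : 0 ≤ (b - a) * b ^ lam := mul_nonneg (by linarith) hblam
  rcases le_or_gt 0 lam with hl | hl
  · have h1 : (∫ x in a..b, x ^ lam) ≤ ∫ _x in a..b, b ^ lam := by
      apply intervalIntegral.integral_mono_on hab.le (intervalIntegral.intervalIntegrable_rpow' hlam)
        intervalIntegrable_const
      intro x hx
      exact Real.rpow_le_rpow (le_trans ha hx.1) hx.2 hl
    rw [intervalIntegral.integral_const, smul_eq_mul] at h1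
    calc (∫ x in a..b, x ^ lam) ≤ (b - a) * b ^ lam := h1
      _ ≤ _ := le_mul_of_one_le_left hba (le_max_left _ _)
  · rcases le_or_gt (b / 2) a with hba2 | hba2
    · have ha0 : 0 < a := lt_of_lt_of_le (by linarith) hba2
      have key : ∀ x ∈ Set.Icc a b, x ^ lam ≤ (2:ℝ) ^ (-lam) * b ^ lam := by
        intro x hx
        have hx0 : 0 < x := lt_of_lt_of_le ha0 hx.1
        calc x ^ lam ≤ (b / 2) ^ lam :=
              Real.rpow_le_rpow_of_nonpos (by linarith) (le_trans hba2 hx.1) hl.le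
          _ = (2:ℝ) ^ (-lam) * b ^ lam := by
              rw [Real.div_rpow hb.le (by norm_num), Real.rpow_neg (by norm_num)]
              ring
      have h1 : (∫ x in a..b, x ^ lam) ≤ ∫ _x in a..b, (2:ℝ) ^ (-lam) * b ^ lam :=
        intervalIntegral.integral_mono_on hab.le (intervalIntegral.intervalIntegrable_rpow' hlam)
          intervalIntegrable_const key
      rw [intervalIntegral.integral_const, smul_eq_mul] at h1
      calc (∫ x in a..b, x ^ lam) ≤ (b - a) * ((2:ℝ) ^ (-lam) * b ^ lam) := h1
        _ = (2:ℝ) ^ (-lam) * ((b - a) * b ^ lam) := by ring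
        _ ≤ _ := by
            apply mul_le_mul_of_nonneg_right _ hba
            exact le_trans (le_max_left _ _) (le_max_right _ _)
    · have h1 : (∫ x in a..b, x ^ lam) ≤ ∫ x in (0:ℝ)..b, x ^ lam := by
        have := intervalIntegral.integral_add_adjacent_intervals
          (intervalIntegral.intervalIntegrable_rpow' (a := 0) (b := a) hlam)
          (intervalIntegral.intervalIntegrable_rpow' (a := a) (b := b) hlam)
        have h0a : 0 ≤ ∫ x in (0:ℝ)..a, x ^ lam :=
          intervalIntegral.integral_nonneg ha (fun u hu => Real.rpow_nonneg hu.1 lam)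
        linarith [this]
      have h2 : (∫ x in (0:ℝ)..b, x ^ lam) = b * b ^ lam / (lam + 1) := by
        rw [integral_rpow (Or.inl hlam), Real.zero_rpow (by linarith), Real.rpow_add_one hb.ne' lam]
        ring
      calc (∫ x in a..b, x ^ lam) ≤ b * b ^ lam / (lam + 1) := by rw [← h2]; exact h1
        _ ≤ 2 * (b - a) * b ^ lam / (lam + 1) := by
            gcongr
            linarith
        _ = 2 / (lam + 1) * ((b - a) * b ^ lam) := by ring
        _ ≤ _ := by
            apply mul_le_mul_of_nonneg_right _ hba
            exact le_trans (le_max_right _ _) (le_max_right _ _)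

/-- For `λ, ν > -1` there are constants `0 < c ≤ C < ∞`, depending only on `λ` and `ν`,
such that for every interval `(a,b)` with `0 ≤ a < b ≤ π`,
`c (b-a) b^λ (π-a)^ν ≤ ∫_a^b θ^λ (π-θ)^ν dθ ≤ C (b-a) b^λ (π-a)^ν`. -/
theorem integral_rpow_mul_rpow_comparable (lam nu : ℝ) (hlam : -1 < lam) (hnu : -1 < nu) :
    ∃ c C : ℝ, 0 < c ∧ c ≤ C ∧ ∀ a b : ℝ, 0 ≤ a → a < b → b ≤ π →
      c * (b - a) * b ^ lam * (π - a) ^ nu ≤ (∫ θ in a..b, θ ^ lam * (π - θ) ^ nu) ∧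
      (∫ θ in a..b, θ ^ lam * (π - θ) ^ nu) ≤ C * (b - a) * b ^ lam * (π - a) ^ nu := by
  obtain ⟨Cl, hCl1, hCl⟩ := oneD_upper hlam
  obtain ⟨Cn, hCn1, hCn⟩ := oneD_upper hnu
  have hcl0 : (0:ℝ) < 4 ^ (-|lam|) := Real.rpow_pos_of_pos (by norm_num) _
  have hcn0 : (0:ℝ) < 4 ^ (-|nu|) := Real.rpow_pos_of_pos (by norm_num) _
  have hcl1 : (4:ℝ) ^ (-|lam|) ≤ 1 :=
    Real.rpow_le_one_of_one_le_of_nonpos (by norm_num) (neg_nonpos.2 (abs_nonneg _))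
  have hcn1 : (4:ℝ) ^ (-|nu|) ≤ 1 :=
    Real.rpow_le_one_of_one_le_of_nonpos (by norm_num) (neg_nonpos.2 (abs_nonneg _))
  have hBl1 : 1 ≤ (2:ℝ) ^ |lam| := Real.one_le_rpow (by norm_num) (abs_nonneg _)
  have hBn1 : 1 ≤ (2:ℝ) ^ |nu| := Real.one_le_rpow (by norm_num) (abs_nonneg _)
  refine ⟨1/2 * ((4:ℝ) ^ (-|lam|) * (4:ℝ) ^ (-|nu|)),
    (2:ℝ) ^ |lam| * (2:ℝ) ^ |nu| * ((Cl + Cn) / 2), by positivity, ?_, ?_⟩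
  · have h1 : (4:ℝ) ^ (-|lam|) * (4:ℝ) ^ (-|nu|) ≤ 1 := by nlinarith
    have h2 : 1 ≤ (2:ℝ) ^ |lam| * (2:ℝ) ^ |nu| := by nlinarith
    have h3 : 1 ≤ (Cl + Cn) / 2 := by linarith
    nlinarith
  intro a b ha hab hbpi
  have hb : 0 < b := lt_of_le_of_lt ha hab
  have hapi : a < π := lt_of_lt_of_le hab hbpi
  have hpa0 : 0 < π - a := by linarith
  set f : ℝ → ℝ := fun θ => θ ^ lam * (π - θ) ^ nu with hfdef
  -- integrability lemmas
  have int2 : ∀ x y : ℝ, IntervalIntegrable (fun θ => (π - θ) ^ nu) volume x y := by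
    intro x y
    have := (intervalIntegral.intervalIntegrable_rpow'
      (a := π - x) (b := π - y) hnu).comp_sub_left π
    simpa using this
  have intLeft : ∀ x y : ℝ, x ≤ y → y < π → IntervalIntegrable f volume x y := by
    intro x y hxy hy
    apply (intervalIntegral.intervalIntegrable_rpow' hlam).mul_continuousOn
    apply ContinuousOn.rpow_const (continuous_const.sub continuous_id).continuousOn
    intro θ hθ
    rw [Set.uIcc_of_le hxy] at hθ
    exact Or.inl (by simp only [Pi.sub_apply, id]; intro h; nlinarith [hθ.2])
  have intRight : ∀ x y : ℝ, 0 < x → x ≤ y → IntervalIntegrable f volume x y := by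
    intro x y hx hxy
    apply (int2 x y).continuousOn_mul
    apply ContinuousOn.rpow_const continuousOn_id
    intro θ hθ
    rw [Set.uIcc_of_le hxy] at hθ
    exact Or.inl (ne_of_gt (lt_of_lt_of_le hx hθ.1))
  set m : ℝ := (a + b) / 2 with hm
  set p : ℝ := (3 * a + b) / 4 with hp
  set q : ℝ := (a + 3 * b) / 4 with hq
  have hp0 : 0 < p := by linarith
  have hap : a ≤ p := by linarith
  have hpq : p ≤ q := by linarith
  have hqb : q ≤ b := by linarith
  have hqpi : q < π := by linarith
  have hampi : m < π := by linarith
  have ham : a < m := by linarith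
  have hmb : m < b := by linarith
  have hm0 : 0 < m := by linarith
  have int_ab : IntervalIntegrable f volume a b :=
    (intLeft a p hap (lt_of_le_of_lt hpq hqpi)).trans (intRight p b hp0 (hpq.trans hqb))
  constructor
  · -- lower bound
    have ptw : ∀ x ∈ Set.Icc p q,
        (4:ℝ) ^ (-|lam|) * b ^ lam * ((4:ℝ) ^ (-|nu|) * (π - a) ^ nu) ≤ f x := by
      intro x hx
      have h1 := (rpow_sandwich (r := lam) (u := b) (K := 4) (x := x) hb (by norm_num)
        (by linarith [hx.1]) (by linarith [hx.2])).1
      have h2 := (rpow_sandwich (r := nu) (u := π - a) (K := 4) (x := π - x) hpa0 (by norm_num)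
        (by linarith [hx.2]) (by linarith [hx.1])).1
      have hx0 : 0 ≤ x := by linarith [hx.1]
      exact mul_le_mul h1 h2 (by positivity) (Real.rpow_nonneg hx0 lam)
    have low1 : (q - p) * ((4:ℝ) ^ (-|lam|) * b ^ lam * ((4:ℝ) ^ (-|nu|) * (π - a) ^ nu))
        ≤ ∫ θ in p..q, f θ := by
      have := intervalIntegral.integral_mono_on hpq
        (intervalIntegrable_const
          (c := (4:ℝ) ^ (-|lam|) * b ^ lam * ((4:ℝ) ^ (-|nu|) * (π - a) ^ nu)))
        (intLeft p q hpq hqpi) ptw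
      rwa [intervalIntegral.integral_const, smul_eq_mul] at this
    have low2 : (∫ θ in p..q, f θ) ≤ ∫ θ in a..b, f θ := by
      apply intervalIntegral.integral_mono_interval hap hpq hqb _ int_ab
      filter_upwards [ae_restrict_mem measurableSet_Ioc] with θ hθ
      exact mul_nonneg (Real.rpow_nonneg (le_trans ha hθ.1.le) lam)
        (Real.rpow_nonneg (by linarith [hθ.2]) nu)
    have hqp : q - p = (b - a) / 2 := by linarith
    calc 1/2 * ((4:ℝ) ^ (-|lam|) * (4:ℝ) ^ (-|nu|)) * (b - a) * b ^ lam * (π - a) ^ nu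
        = (q - p) * ((4:ℝ) ^ (-|lam|) * b ^ lam * ((4:ℝ) ^ (-|nu|) * (π - a) ^ nu)) := by
          rw [hqp]; ring
      _ ≤ ∫ θ in p..q, f θ := low1
      _ ≤ _ := low2
  · -- upper bound
    have split : (∫ θ in a..m, f θ) + (∫ θ in m..b, f θ) = ∫ θ in a..b, f θ :=
      intervalIntegral.integral_add_adjacent_intervals (intLeft a m ham.le hampi)
        (intRight m b hm0 hmb.le)
    have h_am : (∫ θ in a..m, f θ)
        ≤ Cl * ((b - a) / 2 * ((2:ℝ) ^ |lam| * b ^ lam)) * ((2:ℝ) ^ |nu| * (π - a) ^ nu) := by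
      have ptw : ∀ x ∈ Set.Icc a m, f x ≤ x ^ lam * ((2:ℝ) ^ |nu| * (π - a) ^ nu) := by
        intro x hx
        have h2 := (rpow_sandwich (r := nu) (u := π - a) (K := 2) (x := π - x) hpa0 (by norm_num)
          (by linarith [hx.2]) (by linarith [hx.1])).2
        exact mul_le_mul_of_nonneg_left h2 (Real.rpow_nonneg (le_trans ha hx.1) lam)
      have step1 := intervalIntegral.integral_mono_on ham.le (intLeft a m ham.le hampi)
        ((intervalIntegral.intervalIntegrable_rpow' hlam).mul_const
          ((2:ℝ) ^ |nu| * (π - a) ^ nu)) ptw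
      rw [intervalIntegral.integral_mul_const] at step1
      have step2 : (∫ x in a..m, x ^ lam) ≤ Cl * ((b - a) / 2 * ((2:ℝ) ^ |lam| * b ^ lam)) := by
        have hmlam := (rpow_sandwich (r := lam) (u := b) (K := 2) (x := m) hb (by norm_num)
          (by linarith) (by linarith)).2
        have hma : m - a = (b - a) / 2 := by linarith
        calc (∫ x in a..m, x ^ lam) ≤ Cl * ((m - a) * m ^ lam) := hCl a m ha ham
          _ ≤ Cl * ((b - a) / 2 * ((2:ℝ) ^ |lam| * b ^ lam)) := by
              rw [hma]
              exact mul_le_mul_of_nonneg_left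
                (mul_le_mul_of_nonneg_left hmlam (by linarith)) (by linarith)
      calc (∫ θ in a..m, f θ) ≤ (∫ x in a..m, x ^ lam) * ((2:ℝ) ^ |nu| * (π - a) ^ nu) := step1
        _ ≤ _ := mul_le_mul_of_nonneg_right step2 (by positivity)
    have h_mb : (∫ θ in m..b, f θ)
        ≤ (2:ℝ) ^ |lam| * b ^ lam * (Cn * ((b - a) / 2 * ((2:ℝ) ^ |nu| * (π - a) ^ nu))) := by
      have ptw : ∀ x ∈ Set.Icc m b, f x ≤ (2:ℝ) ^ |lam| * b ^ lam * (π - x) ^ nu := by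
        intro x hx
        have h1 := (rpow_sandwich (r := lam) (u := b) (K := 2) (x := x) hb (by norm_num)
          (by linarith [hx.1]) hx.2).2
        exact mul_le_mul_of_nonneg_right h1 (Real.rpow_nonneg (by linarith [hx.2, hbpi]) nu)
      have step1 := intervalIntegral.integral_mono_on hmb.le (intRight m b hm0 hmb.le)
        ((int2 m b).const_mul ((2:ℝ) ^ |lam| * b ^ lam)) ptw
      rw [intervalIntegral.integral_const_mul] at step1
      have step2 : (∫ x in m..b, (π - x) ^ nu)
          ≤ Cn * ((b - a) / 2 * ((2:ℝ) ^ |nu| * (π - a) ^ nu)) := by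
        have key : (∫ x in m..b, (π - x) ^ nu) = ∫ x in (π - b)..(π - m), x ^ nu :=
          intervalIntegral.integral_comp_sub_left (fun s => s ^ nu) π
        have hmnu := (rpow_sandwich (r := nu) (u := π - a) (K := 2) (x := π - m) hpa0 (by norm_num)
          (by linarith) (by linarith)).2
        have hbm : (π - m) - (π - b) = (b - a) / 2 := by linarith
        calc (∫ x in m..b, (π - x) ^ nu) = ∫ x in (π - b)..(π - m), x ^ nu := key
          _ ≤ Cn * (((π - m) - (π - b)) * (π - m) ^ nu) :=
              hCn (π - b) (π - m) (by linarith) (by linarith)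
          _ ≤ Cn * ((b - a) / 2 * ((2:ℝ) ^ |nu| * (π - a) ^ nu)) := by
              rw [hbm]
              exact mul_le_mul_of_nonneg_left
                (mul_le_mul_of_nonneg_left hmnu (by linarith)) (by linarith)
      calc (∫ θ in m..b, f θ) ≤ (2:ℝ) ^ |lam| * b ^ lam * ∫ x in m..b, (π - x) ^ nu := step1
        _ ≤ _ := mul_le_mul_of_nonneg_left step2 (by positivity)
    calc (∫ θ in a..b, f θ) = (∫ θ in a..m, f θ) + (∫ θ in m..b, f θ) := split.symm
      _ ≤ Cl * ((b - a) / 2 * ((2:ℝ) ^ |lam| * b ^ lam)) * ((2:ℝ) ^ |nu| * (π - a) ^ nu)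
          + (2:ℝ) ^ |lam| * b ^ lam * (Cn * ((b - a) / 2 * ((2:ℝ) ^ |nu| * (π - a) ^ nu))) :=
            add_le_add h_am h_mb
      _ = (2:ℝ) ^ |lam| * (2:ℝ) ^ |nu| * ((Cl + Cn) / 2) * (b - a) * b ^ lam * (π - a) ^ nu := by
          ring
end

section
/- Let (X, m) be a σ-finite measure space and 0 < p ≤ q < ∞. Let T be a linear operator from L^p(X, m) to L^q(X, m) such that ‖Tf‖_{L^q} ≤ M ‖f‖_{L^p} for all f ∈ L^p(X, m). Then for every sequence (f_j)_{j≥0} in L^p(X, m): ‖ (Σ_j |T f_j|² )^{1/2} ‖_{L^q} ≤ M ‖ (Σ_j |f_j|² )^{1/2} ‖_{L^p}. -/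
open MeasureTheory Real ProbabilityTheory
open scoped NNReal ENNReal

namespace MZaux

lemma pdf_mul (v₁ v₂ : ℝ≥0) (hv₁ : v₁ ≠ 0) (hv₂ : v₂ ≠ 0) (u x : ℝ) :
    gaussianPDFReal 0 v₁ x * gaussianPDFReal 0 v₂ (u - x) =
      gaussianPDFReal 0 (v₁ + v₂) u *
        gaussianPDFReal ((v₁ : ℝ) * u / ((v₁ : ℝ) + (v₂ : ℝ))) (v₁ * v₂ / (v₁ + v₂)) x := by
  have ha : (0:ℝ) < v₁ := lt_of_le_of_ne (v₁.coe_nonneg) (by exact_mod_cast (Ne.symm hv₁))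
  have hb : (0:ℝ) < v₂ := lt_of_le_of_ne (v₂.coe_nonneg) (by exact_mod_cast (Ne.symm hv₂))
  have hab : (0:ℝ) < (v₁:ℝ) + v₂ := by linarith
  have hpi : (0:ℝ) < π := Real.pi_pos
  simp only [gaussianPDFReal]
  push_cast
  have h1 : √(2 * π * v₁) * √(2 * π * v₂) =
      √(2 * π * ((v₁:ℝ) + v₂)) * √(2 * π * ((v₁:ℝ) * v₂ / ((v₁:ℝ) + v₂))) := by
    rw [← Real.sqrt_mul (by positivity), ← Real.sqrt_mul (by positivity)]
    congr 1
    field_simp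
  have h2 : rexp (-(x - 0) ^ 2 / (2 * v₁)) * rexp (-(u - x - 0) ^ 2 / (2 * v₂)) =
      rexp (-(u - 0) ^ 2 / (2 * ((v₁:ℝ) + v₂))) *
        rexp (-(x - (v₁:ℝ) * u / ((v₁:ℝ) + v₂)) ^ 2 / (2 * ((v₁:ℝ) * v₂ / ((v₁:ℝ) + v₂)))) := by
    rw [← Real.exp_add, ← Real.exp_add]
    congr 1
    field_simp
    ring
  calc (√(2 * π * v₁))⁻¹ * rexp (-(x - 0) ^ 2 / (2 * v₁)) *
        ((√(2 * π * v₂))⁻¹ * rexp (-(u - x - 0) ^ 2 / (2 * v₂)))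
      = (√(2 * π * v₁) * √(2 * π * v₂))⁻¹ *
          (rexp (-(x - 0) ^ 2 / (2 * v₁)) * rexp (-(u - x - 0) ^ 2 / (2 * v₂))) := by
        rw [mul_inv]; ring
    _ = (√(2 * π * ((v₁:ℝ) + v₂)) * √(2 * π * ((v₁:ℝ) * v₂ / ((v₁:ℝ) + v₂))))⁻¹ *
          (rexp (-(u - 0) ^ 2 / (2 * ((v₁:ℝ) + v₂))) *
            rexp (-(x - (v₁:ℝ) * u / ((v₁:ℝ) + v₂)) ^ 2 /
              (2 * ((v₁:ℝ) * v₂ / ((v₁:ℝ) + v₂))))) := by rw [h1, h2]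
    _ = _ := by rw [mul_inv]; ring

end MZaux

namespace MZaux
open ProbabilityTheory

lemma gaussian_conv (v₁ v₂ : ℝ≥0) :
    Measure.map (fun z : ℝ × ℝ => z.1 + z.2)
      ((gaussianReal 0 v₁).prod (gaussianReal 0 v₂)) = gaussianReal 0 (v₁ + v₂) := by
  by_cases hv₁ : v₁ = 0
  · subst hv₁
    rw [gaussianReal_zero_var, Measure.dirac_prod, Measure.map_map measurable_add
      (measurable_prodMk_left), zero_add]
    simp [Function.comp_def]
  by_cases hv₂ : v₂ = 0
  · subst hv₂
    rw [gaussianReal_zero_var, Measure.prod_dirac, Measure.map_map measurable_add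
      (measurable_prodMk_right), add_zero]
    simp [Function.comp_def]
  have hv : v₁ + v₂ ≠ 0 := by simp [hv₁]
  ext s hs
  rw [Measure.map_apply measurable_add hs, Measure.prod_apply (measurable_add hs)]
  have key : ∀ x : ℝ, (gaussianReal 0 v₂) (Prod.mk x ⁻¹' ((fun z : ℝ × ℝ => z.1 + z.2) ⁻¹' s)) =
      ∫⁻ u, s.indicator 1 u * gaussianPDF 0 v₂ (u - x) := by
    intro x
    have hpre : Prod.mk x ⁻¹' ((fun z : ℝ × ℝ => z.1 + z.2) ⁻¹' s) = (fun y => x + y) ⁻¹' s := rfl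
    rw [hpre, gaussianReal_of_var_ne_zero _ hv₂,
      withDensity_apply _ ((measurable_const_add x) hs), ← lintegral_indicator
        ((measurable_const_add x) hs)]
    have : ∀ y : ℝ, ((fun y => x + y) ⁻¹' s).indicator (gaussianPDF 0 v₂) y =
        (fun u => s.indicator 1 u * gaussianPDF 0 v₂ (u - x)) (x + y) := by
      intro y
      simp only [Set.indicator, Set.mem_preimage]
      by_cases hy : x + y ∈ s <;> simp [hy]
    simp_rw [this]
    exact lintegral_add_left_eq_self (fun u => s.indicator 1 u * gaussianPDF 0 v₂ (u - x)) x
  simp_rw [key]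
  rw [gaussianReal_of_var_ne_zero _ hv₁]
  have hmeas : Measurable fun x : ℝ => ∫⁻ u, s.indicator 1 u * gaussianPDF 0 v₂ (u - x) := by
    apply Measurable.lintegral_prod_right (f := fun x u => s.indicator 1 u * gaussianPDF 0 v₂ (u - x))
    exact ((measurable_one.indicator hs).comp measurable_snd).mul
      ((measurable_gaussianPDF 0 v₂).comp (measurable_snd.sub measurable_fst))
  rw [lintegral_withDensity_eq_lintegral_mul _ (measurable_gaussianPDF 0 v₁) hmeas]
  have hmv : (v₁ * v₂ / (v₁ + v₂) : ℝ≥0) ≠ 0 := by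
    simp [div_eq_zero_iff, hv₁, hv₂, hv]
  have inner_eq : ∀ u : ℝ, (∫⁻ x, gaussianPDF 0 v₁ x * gaussianPDF 0 v₂ (u - x)) =
      gaussianPDF 0 (v₁ + v₂) u := by
    intro u
    have : ∀ x : ℝ, gaussianPDF 0 v₁ x * gaussianPDF 0 v₂ (u - x) =
        gaussianPDF 0 (v₁ + v₂) u *
          gaussianPDF ((v₁ : ℝ) * u / ((v₁ : ℝ) + (v₂ : ℝ))) (v₁ * v₂ / (v₁ + v₂)) x := by
      intro x
      simp only [gaussianPDF]
      rw [← ENNReal.ofReal_mul (gaussianPDFReal_nonneg _ _ _),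
        ← ENNReal.ofReal_mul (gaussianPDFReal_nonneg _ _ _), pdf_mul v₁ v₂ hv₁ hv₂ u x]
    simp_rw [this]
    rw [lintegral_const_mul _ (measurable_gaussianPDF _ _), lintegral_gaussianPDF_eq_one _ hmv,
      mul_one]
  calc ∫⁻ x, gaussianPDF 0 v₁ x * ∫⁻ u, s.indicator 1 u * gaussianPDF 0 v₂ (u - x)
      = ∫⁻ x, ∫⁻ u, s.indicator 1 u * (gaussianPDF 0 v₁ x * gaussianPDF 0 v₂ (u - x)) := by
        congr 1; ext x
        have hm : Measurable fun u : ℝ => s.indicator 1 u * gaussianPDF 0 v₂ (u - x) :=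
          (measurable_one.indicator hs).mul
            ((measurable_gaussianPDF 0 v₂).comp (measurable_id.sub measurable_const))
        rw [← lintegral_const_mul _ hm]
        congr 1; ext u; ring
    _ = ∫⁻ u, ∫⁻ x, s.indicator 1 u * (gaussianPDF 0 v₁ x * gaussianPDF 0 v₂ (u - x)) := by
        apply lintegral_lintegral_swap
        apply Measurable.aemeasurable
        exact (((measurable_one.indicator hs)).comp measurable_snd).mul
          (((measurable_gaussianPDF 0 v₁).comp measurable_fst).mul
            ((measurable_gaussianPDF 0 v₂).comp (measurable_snd.sub measurable_fst)))
    _ = ∫⁻ u, s.indicator 1 u * gaussianPDF 0 (v₁ + v₂) u := by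
        congr 1; ext u
        have hm : Measurable fun x : ℝ => gaussianPDF 0 v₁ x * gaussianPDF 0 v₂ (u - x) :=
          (measurable_gaussianPDF 0 v₁).mul
            ((measurable_gaussianPDF 0 v₂).comp (measurable_const.sub measurable_id))
        rw [lintegral_const_mul _ hm, inner_eq u]
    _ = gaussianReal 0 (v₁ + v₂) s := by
        rw [gaussianReal_of_var_ne_zero _ hv, withDensity_apply _ hs,
          ← lintegral_indicator hs]
        congr 1; ext u
        simp only [Set.indicator]
        by_cases hu : u ∈ s <;> simp [hu]

lemma measurable_sum_mul {n : ℕ} (a : Fin n → ℝ) :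
    Measurable (fun ω : Fin n → ℝ => ∑ i, a i * ω i) :=
  Finset.measurable_sum _ fun i _ => (measurable_pi_apply i).const_mul _

lemma map_sum_pi_gaussian : ∀ (n : ℕ) (a : Fin n → ℝ),
    Measure.map (fun ω : Fin n → ℝ => ∑ i, a i * ω i)
      (Measure.pi fun _ : Fin n => gaussianReal 0 1) =
      gaussianReal 0 (∑ i, Real.toNNReal ((a i) ^ 2)) := by
  intro n
  induction n with
  | zero =>
      intro a
      rw [Measure.pi_of_empty]
      rw [Measure.map_dirac' (measurable_sum_mul a)]
      simp
  | succ n ih =>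
      intro a
      set e := MeasurableEquiv.piFinSuccAbove (fun _ : Fin (n + 1) => ℝ) 0 with he
      have hmp := measurePreserving_piFinSuccAbove (fun _ : Fin (n + 1) => gaussianReal 0 1) 0
      have hpi : (Measure.pi fun _ : Fin (n + 1) => gaussianReal 0 1) =
          Measure.map e.symm ((gaussianReal 0 1).prod
            (Measure.pi fun _ : Fin n => gaussianReal 0 1)) := (hmp.symm e).map_eq.symm
      rw [hpi, Measure.map_map (measurable_sum_mul a) e.symm.measurable]
      have hcomp : (fun ω : Fin (n + 1) → ℝ => ∑ i, a i * ω i) ∘ e.symm =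
          (fun z : ℝ × ℝ => z.1 + z.2) ∘
            (Prod.map (fun x : ℝ => a 0 * x) (fun w : Fin n → ℝ => ∑ j, a j.succ * w j)) := by
        ext z
        have hz : e.symm z = Fin.cons z.1 z.2 := by
          simp [he, MeasurableEquiv.piFinSuccAbove, Fin.insertNthEquiv, Fin.insertNth_zero]
        simp only [Function.comp_apply, hz, Prod.map_apply]
        rw [Fin.sum_univ_succ]
        simp [Fin.cons_zero, Fin.cons_succ]
      have hg : Measurable (fun w : Fin n → ℝ => ∑ j, a j.succ * w j) :=
        measurable_sum_mul _
      have hf : Measurable (fun x : ℝ => a 0 * x) := measurable_id.const_mul _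
      rw [hcomp, ← Measure.map_map measurable_add (hf.prodMap hg),
        ← Measure.map_prod_map _ _ hf hg, ih, gaussianReal_map_const_mul]
      have hv : (NNReal.mk (a 0 ^ 2) (sq_nonneg _) * 1 : ℝ≥0) = (a 0 ^ 2).toNNReal := by
        rw [mul_one]; ext; exact (Real.coe_toNNReal _ (sq_nonneg (a 0))).symm
      rw [mul_zero, hv, gaussian_conv, Fin.sum_univ_succ]

noncomputable def gmoment (r : ℝ) : ℝ≥0∞ := ∫⁻ t : ℝ, (ENNReal.ofReal |t|) ^ r ∂(gaussianReal 0 1)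

lemma meas_ofReal_abs_rpow (r : ℝ) : Measurable fun t : ℝ => (ENNReal.ofReal |t|) ^ r :=
  (measurable_abs.ennreal_ofReal).pow_const _

lemma lintegral_abs_rpow_gaussian {r : ℝ} (hr : 0 < r) (v : ℝ≥0) :
    ∫⁻ t : ℝ, (ENNReal.ofReal |t|) ^ r ∂(gaussianReal 0 v) =
      ((v : ℝ≥0∞)) ^ (r / 2) * gmoment r := by
  by_cases hv : v = 0
  · subst hv
    rw [gaussianReal_zero_var, lintegral_dirac' _ (meas_ofReal_abs_rpow r)]
    simp [ENNReal.zero_rpow_of_pos hr, ENNReal.zero_rpow_of_pos (by positivity : (0:ℝ) < r / 2)]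
  · have hmap : (gaussianReal 0 1).map (fun t => Real.sqrt v * t) = gaussianReal 0 v := by
      rw [gaussianReal_map_const_mul (Real.sqrt v)]
      congr 1
      · ring
      · ext
        simp [Real.sq_sqrt v.coe_nonneg]
    rw [← hmap, lintegral_map (meas_ofReal_abs_rpow r) (by fun_prop : Measurable fun t : ℝ => Real.sqrt v * t)]
    have : ∀ t : ℝ, (ENNReal.ofReal |Real.sqrt v * t|) ^ r =
        ((v : ℝ≥0∞)) ^ (r / 2) * (ENNReal.ofReal |t|) ^ r := by
      intro t
      rw [abs_mul, abs_of_nonneg (Real.sqrt_nonneg _),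
        ENNReal.ofReal_mul (Real.sqrt_nonneg _),
        ENNReal.mul_rpow_of_nonneg _ _ hr.le]
      congr 1
      rw [Real.sqrt_eq_rpow, ← ENNReal.ofReal_rpow_of_nonneg v.coe_nonneg (by norm_num),
        ← ENNReal.rpow_mul]
      · rw [ENNReal.ofReal_coe_nnreal]
        congr 1
        ring
    simp_rw [this]
    rw [lintegral_const_mul _ (meas_ofReal_abs_rpow r)]
    rfl

lemma gmoment_lt_top {r : ℝ} (hr : 0 < r) : gmoment r < ⊤ := by
  have h1 : gmoment r = ∫⁻ t : ℝ, ENNReal.ofReal (gaussianPDFReal 0 1 t * |t| ^ r) := by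
    rw [gmoment, gaussianReal_of_var_ne_zero _ one_ne_zero,
      lintegral_withDensity_eq_lintegral_mul _ (measurable_gaussianPDF 0 1)
        (meas_ofReal_abs_rpow r)]
    congr 1; ext t
    simp only [Pi.mul_apply, gaussianPDF]
    rw [ENNReal.ofReal_mul (gaussianPDFReal_nonneg _ _ _)]
    congr 1
    rw [ENNReal.ofReal_rpow_of_nonneg (abs_nonneg t) hr.le]
  rw [h1]
  apply Integrable.lintegral_lt_top
  have hg : Integrable (fun x : ℝ => |x| ^ r * Real.exp (-(1/2) * x ^ 2)) := by
    have h1 : MeasureTheory.IntegrableOn (fun x : ℝ => |x| ^ r * Real.exp (-(1/2) * x ^ 2))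
        (Set.Ioi 0) := by
      apply (integrableOn_rpow_mul_exp_neg_mul_sq (by norm_num : (0:ℝ) < 1/2)
        (by linarith : (-1:ℝ) < r)).congr_fun _ measurableSet_Ioi
      intro x hx
      dsimp only
      rw [abs_of_pos hx]
    rw [← MeasureTheory.integrableOn_univ, ← Set.Iio_union_Ici (a := (0:ℝ)),
      MeasureTheory.integrableOn_union, integrableOn_Ici_iff_integrableOn_Ioi]
    refine ⟨?_, h1⟩
    rw [← (Measure.measurePreserving_neg (volume : Measure ℝ)).integrableOn_comp_preimage
        (Homeomorph.neg ℝ).measurableEmbedding]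
    simp only [Function.comp_def, abs_neg, neg_sq, Set.neg_preimage, Set.neg_Iio, neg_neg,
      neg_zero]
    exact h1
  have : (fun t : ℝ => gaussianPDFReal 0 1 t * |t| ^ r) =
      fun t : ℝ => (Real.sqrt (2 * π * 1))⁻¹ * (|t| ^ r * Real.exp (-(1/2) * t ^ 2)) := by
    ext t
    rw [gaussianPDFReal]
    push_cast
    ring_nf
  rw [this]
  exact hg.const_mul _

lemma gmoment_pos {r : ℝ} (hr : 0 < r) : 0 < gmoment r := by
  rw [gmoment, lintegral_pos_iff_support (meas_ofReal_abs_rpow r)]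
  have hsub : ({0}ᶜ : Set ℝ) ⊆ Function.support fun t : ℝ => (ENNReal.ofReal |t|) ^ r := by
    intro t ht
    simp only [Function.mem_support, ne_eq, ENNReal.rpow_eq_zero_iff]
    push_neg
    constructor
    · intro h; exact absurd hr.le (not_le.mpr (by simpa [ENNReal.ofReal_eq_zero, abs_nonneg,
        le_antisymm_iff] using (by
          have : |t| > 0 := abs_pos.mpr ht
          simp only [ENNReal.ofReal_eq_zero] at h
          linarith)))
    · intro h; exact absurd h (by simp)
  have h0 : (gaussianReal 0 1) ({0}ᶜ : Set ℝ) = 1 := by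
    rw [measure_compl (measurableSet_singleton 0) (measure_ne_top _ _),
      gaussianReal_absolutelyContinuous 0 one_ne_zero (measure_singleton 0)]
    simp
  calc (0:ℝ≥0∞) < 1 := zero_lt_one
    _ = (gaussianReal 0 1) ({0}ᶜ : Set ℝ) := h0.symm
    _ ≤ _ := measure_mono hsub

lemma key_gaussian_identity {n : ℕ} (a : Fin n → ℝ) {r : ℝ} (hr : 0 < r) :
    ∫⁻ ω, (ENNReal.ofReal |∑ i, a i * ω i|) ^ r
        ∂(Measure.pi fun _ : Fin n => gaussianReal 0 1) =
      (∑ i, ENNReal.ofReal ((a i) ^ 2)) ^ (r / 2) * gmoment r := by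
  rw [← lintegral_map (meas_ofReal_abs_rpow r) (measurable_sum_mul a),
    map_sum_pi_gaussian n a, lintegral_abs_rpow_gaussian hr]
  congr 2
  rw [ENNReal.coe_finset_sum]
  exact Finset.sum_congr rfl fun i _ => rfl

lemma iSup_min_nat (a : ℝ≥0∞) : (⨆ k : ℕ, min a (k : ℝ≥0∞)) = a := by
  apply le_antisymm (iSup_le fun k => min_le_left _ _)
  by_cases ha : a = ⊤
  · subst ha
    have hmin : ∀ k : ℕ, min (⊤:ℝ≥0∞) (k:ℝ≥0∞) = (k:ℝ≥0∞) := fun k => min_eq_right le_top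
    simp_rw [hmin]
    rw [ENNReal.iSup_natCast]
  · obtain ⟨n, hn⟩ := ENNReal.exists_nat_gt ha
    calc a = min a n := (min_eq_left hn.le).symm
      _ ≤ _ := le_iSup (fun k : ℕ => min a (k : ℝ≥0∞)) n

lemma iSup_rpow_nat {f : ℕ → ℝ≥0∞} {r : ℝ} (hr : 0 < r) :
    (⨆ n, (f n) ^ r) = (⨆ n, f n) ^ r := by
  apply le_antisymm
  · exact iSup_le fun n => ENNReal.rpow_le_rpow (le_iSup f n) hr.le
  · have h : ∀ n, f n ≤ (⨆ n, (f n) ^ r) ^ (1 / r) := by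
      intro n
      have : f n = ((f n) ^ r) ^ (1 / r) := by
        rw [← ENNReal.rpow_mul, mul_one_div, div_self hr.ne', ENNReal.rpow_one]
      rw [this]
      exact ENNReal.rpow_le_rpow (le_iSup (fun n => (f n) ^ r) n) (by positivity)
    calc (⨆ n, f n) ^ r ≤ ((⨆ n, (f n) ^ r) ^ (1 / r)) ^ r :=
          ENNReal.rpow_le_rpow (iSup_le h) hr.le
      _ = ⨆ n, (f n) ^ r := by
          rw [← ENNReal.rpow_mul, one_div_mul_cancel hr.ne', ENNReal.rpow_one]

lemma minkowski_lintegral {Ω X : Type*} [MeasurableSpace Ω] [MeasurableSpace X]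
    (ν : Measure Ω) [IsFiniteMeasure ν] (μ : Measure X) [SigmaFinite μ]
    {g : X → Ω → ℝ≥0∞} (hg : Measurable (Function.uncurry g)) {r : ℝ} (hr : 1 ≤ r) :
    (∫⁻ ω, (∫⁻ x, g x ω ∂μ) ^ r ∂ν) ^ (1/r) ≤ ∫⁻ x, (∫⁻ ω, (g x ω) ^ r ∂ν) ^ (1/r) ∂μ := by
  have hgx : ∀ x, Measurable (g x) := fun x =>
    hg.comp (measurable_const.prodMk measurable_id)
  have hgω : ∀ ω, Measurable (fun x => g x ω) := fun ω =>
    hg.comp (measurable_id.prodMk measurable_const)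
  rcases eq_or_lt_of_le hr with hr1 | hr1
  · rw [← hr1]
    simp only [one_div_one, ENNReal.rpow_one]
    exact le_of_eq (lintegral_lintegral_swap (f := fun ω x => g x ω)
      ((hg.comp measurable_swap).aemeasurable))
  -- 1 < r
  have hrpos : (0:ℝ) < r := lt_trans zero_lt_one hr1
  have hr1' : (0:ℝ) < r - 1 := by linarith
  have hH : Measurable fun ω => ∫⁻ x, g x ω ∂μ := hg.lintegral_prod_left
  set H : Ω → ℝ≥0∞ := fun ω => ∫⁻ x, g x ω ∂μ with hHdef
  set B : ℝ≥0∞ := ∫⁻ x, (∫⁻ ω, (g x ω) ^ r ∂ν) ^ (1/r) ∂μ with hBdef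
  have hconj : r.HolderConjugate (r / (r - 1)) := Real.HolderConjugate.conjExponent hr1
  have hrr : (r - 1) * (r / (r - 1)) = r := by
    field_simp
  have hc2 : 1 / (r / (r - 1)) = 1 - 1/r := by
    rw [one_div_div, sub_div, div_self hrpos.ne']
  have hexp : (0:ℝ) < 1 - 1/r := by
    rw [sub_pos, div_lt_one hrpos]
    exact hr1
  -- truncated estimate
  have main : ∀ k : ℕ, (∫⁻ ω, (min (H ω) k) ^ r ∂ν) ^ (1/r) ≤ B := by
    intro k
    set Hk : Ω → ℝ≥0∞ := fun ω => min (H ω) k with hHkdef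
    have hHk : Measurable Hk := hH.min measurable_const
    set A : ℝ≥0∞ := ∫⁻ ω, (Hk ω) ^ r ∂ν with hAdef
    have hA_top : A ≠ ⊤ := by
      apply ne_of_lt
      calc A ≤ ∫⁻ _, ((k : ℝ≥0∞)) ^ r ∂ν := by
            apply lintegral_mono
            intro ω
            exact ENNReal.rpow_le_rpow (min_le_right _ _) hrpos.le
        _ = ((k : ℝ≥0∞)) ^ r * ν Set.univ := by rw [lintegral_const]
        _ < ⊤ := ENNReal.mul_lt_top
            (ENNReal.rpow_lt_top_of_nonneg hrpos.le (ENNReal.natCast_ne_top k))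
            (measure_lt_top ν _)
    by_cases hA0 : A = 0
    · rw [hA0, ENNReal.zero_rpow_of_pos (by positivity : (0:ℝ) < 1/r)]
      exact zero_le
    -- A ≤ A^{1-1/r} * B
    have step : A ≤ A ^ (1 - 1/r) * B := by
      have h1 : A ≤ ∫⁻ ω, (Hk ω) ^ (r - 1) * H ω ∂ν := by
        rw [hAdef]
        apply lintegral_mono
        intro ω
        dsimp only
        have hsplit : (Hk ω) ^ r = (Hk ω) ^ (r - 1) * (Hk ω) ^ (1:ℝ) := by
          rw [← ENNReal.rpow_add_of_nonneg _ _ (by linarith) zero_le_one]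
          norm_num
        rw [hsplit, ENNReal.rpow_one]
        exact mul_le_mul_right (min_le_left _ _) _
      have h2 : ∫⁻ ω, (Hk ω) ^ (r - 1) * H ω ∂ν
          = ∫⁻ x, ∫⁻ ω, (Hk ω) ^ (r - 1) * g x ω ∂ν ∂μ := by
        calc ∫⁻ ω, (Hk ω) ^ (r - 1) * H ω ∂ν
            = ∫⁻ ω, ∫⁻ x, (Hk ω) ^ (r - 1) * g x ω ∂μ ∂ν := by
              congr 1; ext ω
              rw [lintegral_const_mul _ (hgω ω)]
          _ = _ := by
              rw [lintegral_lintegral_swap]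
              apply Measurable.aemeasurable
              exact ((hHk.comp measurable_fst).pow_const _).mul
                (hg.comp (measurable_snd.prodMk measurable_fst))
      have h3 : ∀ x, ∫⁻ ω, (Hk ω) ^ (r - 1) * g x ω ∂ν ≤
          (∫⁻ ω, (g x ω) ^ r ∂ν) ^ (1/r) * A ^ (1 - 1/r) := by
        intro x
        have hhold := ENNReal.lintegral_mul_le_Lp_mul_Lq ν hconj
          ((hgx x).aemeasurable) ((hHk.pow_const _).aemeasurable)
          (f := fun ω => g x ω) (g := fun ω => (Hk ω) ^ (r - 1))
        calc ∫⁻ ω, (Hk ω) ^ (r - 1) * g x ω ∂ν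
            = ∫⁻ ω, g x ω * (Hk ω) ^ (r - 1) ∂ν := by
              congr 1; ext ω; ring
          _ ≤ (∫⁻ ω, (g x ω) ^ r ∂ν) ^ (1/r) *
                (∫⁻ ω, ((Hk ω) ^ (r - 1)) ^ (r / (r - 1)) ∂ν) ^ (1 / (r / (r - 1))) := hhold
          _ = (∫⁻ ω, (g x ω) ^ r ∂ν) ^ (1/r) * A ^ (1 - 1/r) := by
              have heq : ∀ ω, ((Hk ω) ^ (r - 1)) ^ (r / (r - 1)) = (Hk ω) ^ r := fun ω => by
                rw [← ENNReal.rpow_mul, hrr]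
              rw [hc2]
              simp_rw [heq]
              rfl
      calc A ≤ ∫⁻ ω, (Hk ω) ^ (r - 1) * H ω ∂ν := h1
        _ = ∫⁻ x, ∫⁻ ω, (Hk ω) ^ (r - 1) * g x ω ∂ν ∂μ := h2
        _ ≤ ∫⁻ x, (∫⁻ ω, (g x ω) ^ r ∂ν) ^ (1/r) * A ^ (1 - 1/r) ∂μ :=
            lintegral_mono h3
        _ = B * A ^ (1 - 1/r) := by
            have hBm : Measurable fun x => (∫⁻ ω, (g x ω) ^ r ∂ν) ^ (1/r) :=
              (Measurable.lintegral_prod_right (f := fun x ω => (g x ω) ^ r)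
                (hg.pow_const r)).pow_const _
            rw [hBdef, ← lintegral_mul_const _ hBm]
        _ = A ^ (1 - 1/r) * B := mul_comm _ _
    -- cancel
    have hsplitA : A ^ (1 - 1/r) * A ^ (1/r) = A := by
      rw [← ENNReal.rpow_add_of_nonneg _ _ hexp.le (by positivity)]
      norm_num
    have hfin : A ^ (1 - 1/r) ≠ ⊤ := ENNReal.rpow_ne_top_of_nonneg hexp.le hA_top
    have hzero : A ^ (1 - 1/r) ≠ 0 := by
      simp only [ne_eq, ENNReal.rpow_eq_zero_iff, not_or, not_and, not_lt]
      exact ⟨fun h => absurd h hA0, fun h => absurd h hA_top⟩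
    have : A ^ (1 - 1/r) * A ^ (1/r) ≤ A ^ (1 - 1/r) * B := by
      rw [hsplitA]; exact step
    exact (ENNReal.mul_le_mul_iff_right hzero hfin).mp this
  -- pass to the limit
  have hmono : Monotone fun k : ℕ => fun ω => (min (H ω) (k : ℝ≥0∞)) ^ r := by
    intro i j hij
    intro ω
    exact ENNReal.rpow_le_rpow (min_le_min le_rfl (by exact_mod_cast Nat.cast_le.mpr hij))
      hrpos.le
  have hlim : ∫⁻ ω, (H ω) ^ r ∂ν = ⨆ k : ℕ, ∫⁻ ω, (min (H ω) k) ^ r ∂ν := by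
    rw [← lintegral_iSup (fun k => (hH.min measurable_const).pow_const r) hmono]
    congr 1; ext ω
    rw [iSup_rpow_nat hrpos, iSup_min_nat]
  rw [hlim, ← iSup_rpow_nat (by positivity : (0:ℝ) < 1/r)]
  exact iSup_le main

lemma ofReal_abs_sq (t : ℝ) : (ENNReal.ofReal |t|) ^ (2:ℝ) = ENNReal.ofReal (t ^ 2) := by
  rw [ENNReal.ofReal_rpow_of_nonneg (abs_nonneg t) (by norm_num : (0:ℝ) ≤ 2)]
  congr 1
  rw [show (2:ℝ) = ((2:ℕ):ℝ) by norm_num, Real.rpow_natCast, sq_abs]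

lemma coeFn_sum_smul {X : Type*} [MeasurableSpace X] (m : Measure X) (P : ℝ≥0∞)
    {ι : Type*} (s : Finset ι) (c : ι → ℝ) (g : ι → Lp ℝ P m) :
    (((∑ i ∈ s, c i • g i : Lp ℝ P m)) : X → ℝ) =ᵐ[m] fun x => ∑ i ∈ s, c i * g i x := by
  classical
  induction s using Finset.induction_on with
  | empty =>
      simp only [Finset.sum_empty]
      filter_upwards [Lp.coeFn_zero (E := ℝ) (p := P) (μ := m)] with x hx
      simpa using hx
  | insert _ _ hnotmem ih =>
      rename_i a s
      rw [Finset.sum_insert hnotmem]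
      filter_upwards [Lp.coeFn_add (c a • g a) (∑ i ∈ s, c i • g i),
        Lp.coeFn_smul (c a) (g a), ih] with x h1 h2 h3
      rw [h1]
      simp only [Pi.add_apply, Finset.sum_insert hnotmem, h2, h3, Pi.smul_apply, smul_eq_mul]

end MZaux

open MZaux ProbabilityTheory

/-- Marcinkiewicz–Zygmund: a bounded linear operator `T : L^p(X,m) → L^q(X,m)`,
`0 < p ≤ q < ∞`, with norm bound `M`, admits an `ℓ²`-valued extension with the same
bound: `‖(Σ_j |T f_j|²)^{1/2}‖_{L^q} ≤ M ‖(Σ_j |f_j|²)^{1/2}‖_{L^p}`. -/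
theorem marcinkiewicz_zygmund_l2_extension {X : Type*} [MeasurableSpace X]
    (m : Measure X) [SigmaFinite m] (p q : ℝ) (hp : 0 < p) (hpq : p ≤ q)
    (T : Lp ℝ (ENNReal.ofReal p) m →ₗ[ℝ] Lp ℝ (ENNReal.ofReal q) m) (M : ℝ)
    (hT : ∀ f : Lp ℝ (ENNReal.ofReal p) m,
      (∫⁻ x, ENNReal.ofReal |T f x| ^ q ∂m) ^ (1/q) ≤
        ENNReal.ofReal M * (∫⁻ x, ENNReal.ofReal |f x| ^ p ∂m) ^ (1/p)) :
    ∀ f : ℕ → Lp ℝ (ENNReal.ofReal p) m,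
      (∫⁻ x, (∑' j : ℕ, ENNReal.ofReal |T (f j) x| ^ (2:ℝ)) ^ (q/2) ∂m) ^ (1/q) ≤
        ENNReal.ofReal M *
          (∫⁻ x, (∑' j : ℕ, ENNReal.ofReal |f j x| ^ (2:ℝ)) ^ (p/2) ∂m) ^ (1/p) := by
  intro f
  have hq : 0 < q := lt_of_lt_of_le hp hpq
  have hcq_pos : 0 < gmoment q := gmoment_pos hq
  have hcq_top : gmoment q ≠ ⊤ := (gmoment_lt_top hq).ne
  set cq := gmoment q with hcqdef
  have hmeasT : ∀ j : ℕ, Measurable fun x => T (f j) x := fun j =>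
    (Lp.stronglyMeasurable (T (f j))).measurable
  have hmeasf : ∀ j : ℕ, Measurable fun x => f j x := fun j =>
    (Lp.stronglyMeasurable (f j)).measurable
  have hr1 : 1 ≤ q / p := (one_le_div hp).mpr hpq
  have hrpos : 0 < q / p := by positivity
  -- the finite case
  have finite_case : ∀ n : ℕ,
      (∫⁻ x, (∑ i : Fin n, ENNReal.ofReal ((T (f i) x) ^ 2)) ^ (q/2) ∂m) ^ (1/q) ≤
        ENNReal.ofReal M *
          (∫⁻ x, (∑ i : Fin n, ENNReal.ofReal ((f i x) ^ 2)) ^ (p/2) ∂m) ^ (1/p) := by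
    intro n
    set γ : Measure (Fin n → ℝ) := Measure.pi fun _ => gaussianReal 0 1 with hγdef
    haveI : IsProbabilityMeasure γ := by rw [hγdef]; infer_instance
    set An : ℝ≥0∞ := ∫⁻ x, (∑ i : Fin n, ENNReal.ofReal ((T (f i) x) ^ 2)) ^ (q/2) ∂m with hAndef
    set Bn : ℝ≥0∞ := ∫⁻ x, (∑ i : Fin n, ENNReal.ofReal ((f i x) ^ 2)) ^ (p/2) ∂m with hBndef
    set F : X → (Fin n → ℝ) → ℝ≥0∞ :=
      fun x ω => (ENNReal.ofReal |∑ i : Fin n, T (f i) x * ω i|) ^ q with hFdef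
    set G : X → (Fin n → ℝ) → ℝ≥0∞ :=
      fun x ω => (ENNReal.ofReal |∑ i : Fin n, f i x * ω i|) ^ p with hGdef
    have hFm : Measurable (Function.uncurry F) := by
      apply Measurable.pow_const
      apply Measurable.ennreal_ofReal
      apply Measurable.abs
      exact Finset.measurable_sum _ fun i _ =>
        ((hmeasT i).comp measurable_fst).mul ((measurable_pi_apply i).comp measurable_snd)
    have hGm : Measurable (Function.uncurry G) := by
      apply Measurable.pow_const
      apply Measurable.ennreal_ofReal
      apply Measurable.abs
      exact Finset.measurable_sum _ fun i _ =>
        ((hmeasf i).comp measurable_fst).mul ((measurable_pi_apply i).comp measurable_snd)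
    have hSTm : Measurable fun x => (∑ i : Fin n, ENNReal.ofReal ((T (f i) x) ^ 2)) ^ (q/2) := by
      apply Measurable.pow_const
      exact Finset.measurable_sum _ fun i _ => (((hmeasT i).pow_const 2).ennreal_ofReal)
    have hSfm : Measurable fun x => (∑ i : Fin n, ENNReal.ofReal ((f i x) ^ 2)) ^ (p/2) := by
      apply Measurable.pow_const
      exact Finset.measurable_sum _ fun i _ => (((hmeasf i).pow_const 2).ennreal_ofReal)
    -- step 1 : An * cq = double integral
    have step1 : An * cq = ∫⁻ x, ∫⁻ ω, F x ω ∂γ ∂m := by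
      rw [hAndef, ← lintegral_mul_const _ hSTm]
      congr 1; ext x
      rw [hγdef]
      rw [key_gaussian_identity (fun i => T (f i) x) hq]
    -- step 2 : swap
    have step2 : ∫⁻ x, ∫⁻ ω, F x ω ∂γ ∂m = ∫⁻ ω, ∫⁻ x, F x ω ∂m ∂γ :=
      lintegral_lintegral_swap hFm.aemeasurable
    -- step 3 : apply hT for each ω
    have step3 : ∀ ω : Fin n → ℝ, ∫⁻ x, F x ω ∂m ≤
        (ENNReal.ofReal M) ^ q * (∫⁻ x, G x ω ∂m) ^ (q/p) := by
      intro ω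
      set g0 : Lp ℝ (ENNReal.ofReal p) m := ∑ i : Fin n, ω i • f i with hg0def
      have hTg0 : T g0 = ∑ i : Fin n, ω i • T (f i) := by
        rw [hg0def, map_sum]
        simp_rw [LinearMap.map_smul]
      have hae1 : (T g0 : X → ℝ) =ᵐ[m] fun x => ∑ i : Fin n, ω i * T (f i) x := by
        rw [hTg0]
        exact coeFn_sum_smul m _ _ _ _
      have hae2 : (g0 : X → ℝ) =ᵐ[m] fun x => ∑ i : Fin n, ω i * f i x :=
        coeFn_sum_smul m _ _ _ _
      have hI : ∫⁻ x, F x ω ∂m = ∫⁻ x, ENNReal.ofReal |T g0 x| ^ q ∂m := by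
        apply lintegral_congr_ae
        filter_upwards [hae1] with x hx
        rw [hFdef]
        simp only [hx]
        congr 3
        exact Finset.sum_congr rfl fun i _ => mul_comm _ _
      have hJ : ∫⁻ x, ENNReal.ofReal |g0 x| ^ p ∂m = ∫⁻ x, G x ω ∂m := by
        apply lintegral_congr_ae
        filter_upwards [hae2] with x hx
        rw [hGdef]
        simp only [hx]
        congr 3
        exact Finset.sum_congr rfl fun i _ => mul_comm _ _
      have hT0 := hT g0
      have hraise := ENNReal.rpow_le_rpow hT0 hq.le
      rw [← ENNReal.rpow_mul, one_div_mul_cancel hq.ne', ENNReal.rpow_one,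
        ENNReal.mul_rpow_of_nonneg _ _ hq.le, ← ENNReal.rpow_mul] at hraise
      rw [← hI, hJ] at hraise
      rw [show 1/p * q = q/p by ring] at hraise
      exact hraise
    -- step 4 : integrate the bound over ω
    have hGint : Measurable fun ω => (∫⁻ x, G x ω ∂m) ^ (q/p) :=
      (hGm.lintegral_prod_left).pow_const _
    have step4 : ∫⁻ ω, ∫⁻ x, F x ω ∂m ∂γ ≤
        (ENNReal.ofReal M) ^ q * ∫⁻ ω, (∫⁻ x, G x ω ∂m) ^ (q/p) ∂γ := by
      rw [← lintegral_const_mul _ hGint]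
      exact lintegral_mono step3
    -- step 5 : Minkowski
    have step5 : ∫⁻ ω, (∫⁻ x, G x ω ∂m) ^ (q/p) ∂γ ≤
        (∫⁻ x, (∫⁻ ω, (G x ω) ^ (q/p) ∂γ) ^ (p/q) ∂m) ^ (q/p) := by
      have hmk := minkowski_lintegral γ m hGm hr1
      have := ENNReal.rpow_le_rpow hmk hrpos.le
      rw [← ENNReal.rpow_mul, one_div_mul_cancel hrpos.ne', ENNReal.rpow_one] at this
      calc ∫⁻ ω, (∫⁻ x, G x ω ∂m) ^ (q/p) ∂γ
          ≤ (∫⁻ x, (∫⁻ ω, (G x ω) ^ (q/p) ∂γ) ^ (1/(q/p)) ∂m) ^ (q/p) := this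
        _ = _ := by rw [show 1/(q/p) = p/q by rw [one_div_div]]
    -- step 6 : evaluate the inner integral
    have step6 : ∀ x, ∫⁻ ω, (G x ω) ^ (q/p) ∂γ =
        (∑ i : Fin n, ENNReal.ofReal ((f i x) ^ 2)) ^ (q/2) * cq := by
      intro x
      have : ∀ ω, (G x ω) ^ (q/p) = (ENNReal.ofReal |∑ i : Fin n, f i x * ω i|) ^ q := by
        intro ω
        rw [hGdef]
        rw [← ENNReal.rpow_mul]
        congr 1
        field_simp
      simp_rw [this]
      rw [hγdef, key_gaussian_identity (fun i => f i x) hq]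
    -- step 7 : outer integral
    have step7 : (∫⁻ x, (∫⁻ ω, (G x ω) ^ (q/p) ∂γ) ^ (p/q) ∂m) ^ (q/p) =
        Bn ^ (q/p) * cq := by
      have h1 : ∀ x, (∫⁻ ω, (G x ω) ^ (q/p) ∂γ) ^ (p/q) =
          (∑ i : Fin n, ENNReal.ofReal ((f i x) ^ 2)) ^ (p/2) * cq ^ (p/q) := by
        intro x
        rw [step6 x, ENNReal.mul_rpow_of_nonneg _ _ (by positivity : (0:ℝ) ≤ p/q),
          ← ENNReal.rpow_mul]
        congr 2
        field_simp
      simp_rw [h1]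
      rw [lintegral_mul_const _ hSfm, ← hBndef,
        ENNReal.mul_rpow_of_nonneg _ _ hrpos.le, ← ENNReal.rpow_mul]
      congr 1
      rw [show p/q * (q/p) = 1 by field_simp, ENNReal.rpow_one]
    -- assemble
    have main_ineq : An ≤ (ENNReal.ofReal M) ^ q * Bn ^ (q/p) := by
      have chain : An * cq ≤ ((ENNReal.ofReal M) ^ q * Bn ^ (q/p)) * cq := by
        calc An * cq = ∫⁻ ω, ∫⁻ x, F x ω ∂m ∂γ := by rw [step1, step2]
          _ ≤ (ENNReal.ofReal M) ^ q * ∫⁻ ω, (∫⁻ x, G x ω ∂m) ^ (q/p) ∂γ := step4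
          _ ≤ (ENNReal.ofReal M) ^ q *
                (∫⁻ x, (∫⁻ ω, (G x ω) ^ (q/p) ∂γ) ^ (p/q) ∂m) ^ (q/p) :=
              mul_le_mul_right step5 _
          _ = (ENNReal.ofReal M) ^ q * (Bn ^ (q/p) * cq) := by rw [step7]
          _ = ((ENNReal.ofReal M) ^ q * Bn ^ (q/p)) * cq := by ring
      exact (ENNReal.mul_le_mul_iff_left hcq_pos.ne' hcq_top).mp chain
    -- take rpow 1/q
    have := ENNReal.rpow_le_rpow main_ineq (by positivity : (0:ℝ) ≤ 1/q)
    rw [ENNReal.mul_rpow_of_nonneg _ _ (by positivity : (0:ℝ) ≤ 1/q),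
      ← ENNReal.rpow_mul, ← ENNReal.rpow_mul, mul_one_div, div_self hq.ne',
      ENNReal.rpow_one, show q/p * (1/q) = 1/p by field_simp] at this
    exact this
  -- pass to the limit
  set u : ℕ → X → ℝ≥0∞ := fun j x => ENNReal.ofReal |T (f j) x| ^ (2:ℝ) with hudef
  set w : ℕ → X → ℝ≥0∞ := fun j x => ENNReal.ofReal |f j x| ^ (2:ℝ) with hwdef
  have hum : ∀ j, Measurable (u j) := fun j => ((hmeasT j).abs.ennreal_ofReal).pow_const _
  have hconvT : ∀ n x, (∑ j ∈ Finset.range n, u j x) =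
      ∑ i : Fin n, ENNReal.ofReal ((T (f i) x) ^ 2) := by
    intro n x
    rw [← Fin.sum_univ_eq_sum_range]
    exact Finset.sum_congr rfl fun i _ => ofReal_abs_sq _
  have hconvf : ∀ n x, (∑ j ∈ Finset.range n, w j x) =
      ∑ i : Fin n, ENNReal.ofReal ((f i x) ^ 2) := by
    intro n x
    rw [← Fin.sum_univ_eq_sum_range]
    exact Finset.sum_congr rfl fun i _ => ofReal_abs_sq _
  have hBle : ∀ n : ℕ, (∫⁻ x, (∑ i : Fin n, ENNReal.ofReal ((f i x) ^ 2)) ^ (p/2) ∂m) ≤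
      ∫⁻ x, (∑' j : ℕ, w j x) ^ (p/2) ∂m := by
    intro n
    apply lintegral_mono
    intro x
    apply ENNReal.rpow_le_rpow _ (by positivity : (0:ℝ) ≤ p/2)
    rw [← hconvf n x]
    exact ENNReal.sum_le_tsum _
  have hlhs : ∫⁻ x, (∑' j : ℕ, u j x) ^ (q/2) ∂m =
      ⨆ n : ℕ, ∫⁻ x, (∑ i : Fin n, ENNReal.ofReal ((T (f i) x) ^ 2)) ^ (q/2) ∂m := by
    have hmono : Monotone fun n : ℕ => fun x => (∑ j ∈ Finset.range n, u j x) ^ (q/2) := by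
      intro a b hab x
      apply ENNReal.rpow_le_rpow _ (by positivity : (0:ℝ) ≤ q/2)
      exact Finset.sum_le_sum_of_subset (Finset.range_subset_range.mpr hab)
    have hpt : ∀ x, (∑' j : ℕ, u j x) ^ (q/2) =
        ⨆ n : ℕ, (∑ j ∈ Finset.range n, u j x) ^ (q/2) := by
      intro x
      rw [iSup_rpow_nat (by positivity : (0:ℝ) < q/2), ENNReal.tsum_eq_iSup_nat]
    have hmeasn : ∀ n : ℕ, Measurable fun x => (∑ j ∈ Finset.range n, u j x) ^ (q/2) := by
      intro n
      apply Measurable.pow_const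
      exact Finset.measurable_sum _ fun j _ => hum j
    calc ∫⁻ x, (∑' j : ℕ, u j x) ^ (q/2) ∂m
        = ∫⁻ x, ⨆ n : ℕ, (∑ j ∈ Finset.range n, u j x) ^ (q/2) ∂m :=
          lintegral_congr fun x => hpt x
      _ = ⨆ n : ℕ, ∫⁻ x, (∑ j ∈ Finset.range n, u j x) ^ (q/2) ∂m :=
          lintegral_iSup hmeasn hmono
      _ = _ := by
          congr 1; ext n
          apply lintegral_congr
          intro x
          rw [hconvT n x]
  rw [hlhs, ← iSup_rpow_nat (by positivity : (0:ℝ) < 1/q)]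
  apply iSup_le
  intro n
  calc (∫⁻ x, (∑ i : Fin n, ENNReal.ofReal ((T (f i) x) ^ 2)) ^ (q/2) ∂m) ^ (1/q)
      ≤ ENNReal.ofReal M *
        (∫⁻ x, (∑ i : Fin n, ENNReal.ofReal ((f i x) ^ 2)) ^ (p/2) ∂m) ^ (1/p) := finite_case n
    _ ≤ ENNReal.ofReal M * (∫⁻ x, (∑' j : ℕ, w j x) ^ (p/2) ∂m) ^ (1/p) :=
        mul_le_mul_right (ENNReal.rpow_le_rpow (hBle n) (by positivity)) _
end

section
/- Let 0 < σ < 1, α, β ≥ −1/2, and suppose the exponents p, q satisfy max{(2α+2)/(α+3/2), (2β+2)/(β+3/2)} < p ≤ q < min{(2α+2)/(α+1/2), (2β+2)/(β+1/2)} and 1/q ≥ 1/p − min{σ/(2α+2), σ/(2β+2)}. Let w(θ) = (sin(θ/2))^{(2α+1)(1−q/2)} (cos(θ/2))^{(2β+1)(1−q/2)} and v̄(θ) = (sin(θ/2))^{(2α+1)(1−p/2)·(−1/(p−1))} (cos(θ/2))^{(2β+1)(1−p/2)·(−1/(p−1))} on (0,π). Then there exists a constant C < ∞, depending only on σ, α,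 β, p and q, such that for every interval I ⊂ (0,π): (∫_I w(θ) dθ)^{1/q} (∫_I v̄(θ) dθ)^{(p−1)/p} ≤ C |I|^{1−σ}. -/
open MeasureTheory Real Set
open scoped ENNReal

namespace PWTaux
lemma rpow_add_le {x y m : ℝ} (hx : 0 ≤ x) (hy : 0 ≤ y) (h0 : 0 ≤ m) (h1 : m ≤ 1) :
    (x + y) ^ m ≤ x ^ m + y ^ m := by
  have h := NNReal.rpow_add_le_add_rpow x.toNNReal y.toNNReal h0 h1
  have h' := NNReal.coe_le_coe.mpr h
  push_cast [NNReal.coe_rpow, Real.coe_toNNReal x hx, Real.coe_toNNReal y hy] at h'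
  exact h'

lemma pad {x c E τ : ℝ} (hx : 0 < x) (hxc : x ≤ c) (hτ : 0 < τ) (hE : τ ≤ E) :
    x ^ E ≤ c ^ (E - τ) * x ^ τ := by
  calc x ^ E = x ^ (E - τ) * x ^ τ := by rw [← Real.rpow_add hx]; ring_nf
    _ ≤ c ^ (E - τ) * x ^ τ :=
      mul_le_mul_of_nonneg_right (Real.rpow_le_rpow hx.le hxc (by linarith))
        (Real.rpow_nonneg hx.le _)

lemma rpow_le_max {u m s : ℝ} (hm : 0 < m) (h1 : m ≤ u) (h2 : u ≤ 1) :
    u ^ s ≤ max 1 (m ^ s) := by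
  rcases le_or_gt 0 s with hs | hs
  · exact le_max_of_le_left (Real.rpow_le_one (hm.le.trans h1) h2 hs)
  · exact le_max_of_le_right (Real.rpow_le_rpow_of_nonpos hm h1 hs.le)

lemma rpow_comparable {a θ s : ℝ} (ha : 0 < a) (h1 : a ≤ θ) (h2 : θ ≤ 2*a) :
    θ ^ s ≤ max 1 (2 ^ s) * a ^ s := by
  have ha' : (0:ℝ) ≤ a ^ s := Real.rpow_nonneg ha.le s
  rcases le_or_gt 0 s with hs | hs
  · calc θ ^ s ≤ (2*a) ^ s := Real.rpow_le_rpow (by linarith) h2 hs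
      _ = 2 ^ s * a ^ s := Real.mul_rpow (by norm_num) ha.le
      _ ≤ max 1 (2 ^ s) * a ^ s := mul_le_mul_of_nonneg_right (le_max_right _ _) ha'
  · calc θ ^ s ≤ a ^ s := Real.rpow_le_rpow_of_nonpos ha h1 hs.le
      _ = 1 * a ^ s := (one_mul _).symm
      _ ≤ max 1 (2 ^ s) * a ^ s := mul_le_mul_of_nonneg_right (le_max_left _ _) ha'

lemma sin_half_lb {θ : ℝ} (h0 : 0 ≤ θ) (h1 : θ ≤ π) : θ / π ≤ sin (θ/2) := by
  have h := Real.mul_le_sin (x := θ/2) (by linarith) (by linarith)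
  have hπ := Real.pi_pos
  calc θ / π = 2 / π * (θ/2) := by field_simp
    _ ≤ sin (θ/2) := h

lemma cos_half_eq (θ : ℝ) : cos (θ/2) = sin ((π - θ)/2) := by
  rw [show (π - θ)/2 = π/2 - θ/2 by ring, Real.sin_pi_div_two_sub]

lemma cos_half_lb {θ : ℝ} (h0 : 0 ≤ θ) (h1 : θ ≤ π) : (π - θ) / π ≤ cos (θ/2) := by
  rw [cos_half_eq]; exact sin_half_lb (by linarith) (by linarith)

lemma sin_half_ub {θ : ℝ} (h0 : 0 ≤ θ) : sin (θ/2) ≤ θ :=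
  (Real.sin_le (by linarith)).trans (by linarith)

lemma cos_half_ub {θ : ℝ} (h1 : θ ≤ π) : cos (θ/2) ≤ π - θ := by
  rw [cos_half_eq]; exact sin_half_ub (by linarith)

lemma sin_half_nonneg {θ : ℝ} (h0 : 0 ≤ θ) (h1 : θ ≤ π) : 0 ≤ sin (θ/2) :=
  Real.sin_nonneg_of_nonneg_of_le_pi (by linarith) (by linarith [Real.pi_pos])

lemma cos_half_nonneg {θ : ℝ} (h0 : 0 ≤ θ) (h1 : θ ≤ π) : 0 ≤ cos (θ/2) := by
  rw [cos_half_eq]; exact sin_half_nonneg (by linarith) (by linarith)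


lemma lint_rpow_le (e : ℝ) (he : -1 < e) {a b : ℝ} (ha : 0 ≤ a) (hab : a ≤ b) :
    (∫⁻ θ in Ioo a b, ENNReal.ofReal (θ ^ e)) ≤ ENNReal.ofReal (b ^ (e+1) / (e+1)) := by
  have h0b : (0:ℝ) ≤ b := ha.trans hab
  have hInt : IntegrableOn (fun θ : ℝ => θ ^ e) (Ioo 0 b) := by
    have h := intervalIntegral.intervalIntegrable_rpow' (a := (0:ℝ)) (b := b) he
    rwa [intervalIntegrable_iff_integrableOn_Ioo_of_le h0b] at h
  have hnn : 0 ≤ᵐ[volume.restrict (Ioo (0:ℝ) b)] fun θ : ℝ => θ ^ e := by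
    filter_upwards [ae_restrict_mem measurableSet_Ioo] with θ hθ
    exact Real.rpow_nonneg hθ.1.le e
  calc (∫⁻ θ in Ioo a b, ENNReal.ofReal (θ ^ e))
      ≤ ∫⁻ θ in Ioo 0 b, ENNReal.ofReal (θ ^ e) :=
        lintegral_mono_set (Ioo_subset_Ioo_left ha)
    _ = ENNReal.ofReal (∫ θ in Ioo 0 b, θ ^ e) :=
        (ofReal_integral_eq_lintegral_ofReal hInt hnn).symm
    _ = ENNReal.ofReal (b ^ (e+1) / (e+1)) := by
        rw [← integral_Ioc_eq_integral_Ioo, ← intervalIntegral.integral_of_le h0b,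
          integral_rpow (Or.inl he), Real.zero_rpow (by linarith : e + 1 ≠ 0), sub_zero]

lemma lint_rpow_ref_le (e : ℝ) (he : -1 < e) {a b : ℝ} (hab : a ≤ b) (hb : b ≤ π) :
    (∫⁻ θ in Ioo a b, ENNReal.ofReal ((π - θ) ^ e)) ≤
      ENNReal.ofReal ((π - a) ^ (e+1) / (e+1)) := by
  have haπ : a ≤ π := hab.trans hb
  have hInt : IntegrableOn (fun θ : ℝ => (π - θ) ^ e) (Ioo a π) := by
    have h := ((intervalIntegral.intervalIntegrable_rpow' (a := (0:ℝ)) (b := π - a) he).comp_sub_left π).symm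
    simp only [sub_zero, sub_sub_cancel] at h
    rwa [intervalIntegrable_iff_integrableOn_Ioo_of_le haπ] at h
  have hnn : 0 ≤ᵐ[volume.restrict (Ioo a π)] fun θ : ℝ => (π - θ) ^ e := by
    filter_upwards [ae_restrict_mem measurableSet_Ioo] with θ hθ
    exact Real.rpow_nonneg (by linarith [hθ.2]) e
  calc (∫⁻ θ in Ioo a b, ENNReal.ofReal ((π - θ) ^ e))
      ≤ ∫⁻ θ in Ioo a π, ENNReal.ofReal ((π - θ) ^ e) :=
        lintegral_mono_set (Ioo_subset_Ioo_right hb)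
    _ = ENNReal.ofReal (∫ θ in Ioo a π, (π - θ) ^ e) :=
        (ofReal_integral_eq_lintegral_ofReal hInt hnn).symm
    _ = ENNReal.ofReal ((π - a) ^ (e+1) / (e+1)) := by
        rw [← integral_Ioc_eq_integral_Ioo, ← intervalIntegral.integral_of_le haπ,
          intervalIntegral.integral_comp_sub_left (fun x => x ^ e) π, sub_self,
          integral_rpow (Or.inl he), Real.zero_rpow (by linarith : e + 1 ≠ 0), sub_zero]

lemma lint_le_const {a b M : ℝ} {f : ℝ → ℝ} (hab : a ≤ b) (hM : 0 ≤ M)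
    (h : ∀ θ, θ ∈ Ioo a b → f θ ≤ M) :
    (∫⁻ θ in Ioo a b, ENNReal.ofReal (f θ)) ≤ ENNReal.ofReal (M * (b - a)) := by
  calc (∫⁻ θ in Ioo a b, ENNReal.ofReal (f θ))
      ≤ ∫⁻ _ in Ioo a b, ENNReal.ofReal M :=
        setLIntegral_mono' measurableSet_Ioo fun θ hθ => ENNReal.ofReal_le_ofReal (h θ hθ)
    _ = ENNReal.ofReal M * volume (Ioo a b) := setLIntegral_const _ _
    _ = ENNReal.ofReal (M * (b - a)) := by
        rw [Real.volume_Ioo, ← ENNReal.ofReal_mul hM]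

lemma lint_ofReal_const_mul {s : Set ℝ} {c : ℝ} (hc : 0 ≤ c) (f : ℝ → ℝ) :
    (∫⁻ θ in s, ENNReal.ofReal (c * f θ)) = ENNReal.ofReal c * ∫⁻ θ in s, ENNReal.ofReal (f θ) := by
  simp_rw [ENNReal.ofReal_mul hc]
  exact lintegral_const_mul' _ _ ENNReal.ofReal_ne_top

lemma combine {X Y : ℝ≥0∞} {c1 c2 r1 r2 : ℝ} (hX : X ≤ ENNReal.ofReal c1)
    (hY : Y ≤ ENNReal.ofReal c2) (hr1 : 0 ≤ r1) (hr2 : 0 ≤ r2) (hc1 : 0 ≤ c1) (hc2 : 0 ≤ c2) :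
    X ^ r1 * Y ^ r2 ≤ ENNReal.ofReal (c1 ^ r1 * c2 ^ r2) := by
  rw [ENNReal.ofReal_mul (Real.rpow_nonneg hc1 _), ← ENNReal.ofReal_rpow_of_nonneg hc1 hr1,
    ← ENNReal.ofReal_rpow_of_nonneg hc2 hr2]
  exact mul_le_mul' (ENNReal.rpow_le_rpow hX hr1) (ENNReal.rpow_le_rpow hY hr2)


lemma weight_pt_left (s t : ℝ) : ∃ C : ℝ, 0 < C ∧ ∀ θ : ℝ, 0 < θ → θ ≤ π/2 →
    sin (θ/2) ^ s * cos (θ/2) ^ t ≤ C * θ ^ s := by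
  have hπ := Real.pi_pos
  refine ⟨(1 + (π ^ s)⁻¹) * max 1 ((1/2 : ℝ) ^ t), by positivity, fun θ h0 h2 => ?_⟩
  have hθπ : θ ≤ π := by linarith
  have hsin : sin (θ/2) ^ s ≤ (1 + (π ^ s)⁻¹) * θ ^ s := by
    rcases le_or_gt 0 s with hs | hs
    · have h1 : sin (θ/2) ^ s ≤ θ ^ s :=
        Real.rpow_le_rpow (sin_half_nonneg h0.le hθπ) (sin_half_ub h0.le) hs
      have h2' : (0:ℝ) ≤ θ ^ s := Real.rpow_nonneg h0.le s
      nlinarith [inv_nonneg.mpr (Real.rpow_nonneg hπ.le s)]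
    · have h1 : sin (θ/2) ^ s ≤ (θ/π) ^ s := by
        refine Real.rpow_le_rpow_of_nonpos (by positivity) (sin_half_lb h0.le hθπ) hs.le
      have h2' : (θ/π) ^ s = θ ^ s * (π ^ s)⁻¹ := by
        rw [Real.div_rpow h0.le hπ.le, div_eq_mul_inv]
      have h3 : (0:ℝ) ≤ θ ^ s := Real.rpow_nonneg h0.le s
      have h4 : (0:ℝ) ≤ (π ^ s)⁻¹ := inv_nonneg.mpr (Real.rpow_nonneg hπ.le s)
      nlinarith
  have hcos : cos (θ/2) ^ t ≤ max 1 ((1/2 : ℝ) ^ t) := by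
    refine rpow_le_max (by norm_num) ?_ (Real.cos_le_one _)
    calc (1/2 : ℝ) = (π - π/2)/π := by field_simp; ring
      _ ≤ (π - θ)/π := by gcongr <;> linarith
      _ ≤ cos (θ/2) := cos_half_lb h0.le hθπ
  calc sin (θ/2) ^ s * cos (θ/2) ^ t
      ≤ ((1 + (π ^ s)⁻¹) * θ ^ s) * max 1 ((1/2 : ℝ) ^ t) := by
        refine mul_le_mul hsin hcos (Real.rpow_nonneg (cos_half_nonneg h0.le hθπ) t) ?_
        positivity
    _ = ((1 + (π ^ s)⁻¹) * max 1 ((1/2 : ℝ) ^ t)) * θ ^ s := by ring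

lemma weight_pt_right (s t : ℝ) : ∃ C : ℝ, 0 < C ∧ ∀ θ : ℝ, π/2 ≤ θ → θ < π →
    sin (θ/2) ^ s * cos (θ/2) ^ t ≤ C * (π - θ) ^ t := by
  have hπ := Real.pi_pos
  refine ⟨max 1 ((1/2 : ℝ) ^ s) * (1 + (π ^ t)⁻¹), by positivity, fun θ h0 h2 => ?_⟩
  have hθ0 : 0 ≤ θ := by linarith
  have hθπ : θ ≤ π := h2.le
  have hρ : 0 < π - θ := by linarith
  have hcos : cos (θ/2) ^ t ≤ (1 + (π ^ t)⁻¹) * (π - θ) ^ t := by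
    rcases le_or_gt 0 t with ht | ht
    · have h1 : cos (θ/2) ^ t ≤ (π - θ) ^ t :=
        Real.rpow_le_rpow (cos_half_nonneg hθ0 hθπ) (cos_half_ub hθπ) ht
      have h3 : (0:ℝ) ≤ (π - θ) ^ t := Real.rpow_nonneg hρ.le t
      nlinarith [inv_nonneg.mpr (Real.rpow_nonneg hπ.le t)]
    · have h1 : cos (θ/2) ^ t ≤ ((π - θ)/π) ^ t := by
        refine Real.rpow_le_rpow_of_nonpos (by positivity) (cos_half_lb hθ0 hθπ) ht.le
      have h2' : ((π - θ)/π) ^ t = (π - θ) ^ t * (π ^ t)⁻¹ := by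
        rw [Real.div_rpow hρ.le hπ.le, div_eq_mul_inv]
      have h3 : (0:ℝ) ≤ (π - θ) ^ t := Real.rpow_nonneg hρ.le t
      have h4 : (0:ℝ) ≤ (π ^ t)⁻¹ := inv_nonneg.mpr (Real.rpow_nonneg hπ.le t)
      nlinarith
  have hsin : sin (θ/2) ^ s ≤ max 1 ((1/2 : ℝ) ^ s) := by
    refine rpow_le_max (by norm_num) ?_ (Real.sin_le_one _)
    calc (1/2 : ℝ) = (π/2)/π := by field_simp
      _ ≤ θ/π := by gcongr
      _ ≤ sin (θ/2) := sin_half_lb hθ0 hθπ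
  calc sin (θ/2) ^ s * cos (θ/2) ^ t
      ≤ max 1 ((1/2 : ℝ) ^ s) * ((1 + (π ^ t)⁻¹) * (π - θ) ^ t) := by
        refine mul_le_mul hsin hcos (Real.rpow_nonneg (cos_half_nonneg hθ0 hθπ) t) ?_
        positivity
    _ = (max 1 ((1/2 : ℝ) ^ s) * (1 + (π ^ t)⁻¹)) * (π - θ) ^ t := by ring

lemma weight_pt_mid (s t : ℝ) : ∃ C : ℝ, 0 < C ∧ ∀ θ : ℝ, π/4 ≤ θ → θ ≤ 3*π/4 →
    sin (θ/2) ^ s * cos (θ/2) ^ t ≤ C := by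
  have hπ := Real.pi_pos
  refine ⟨max 1 ((1/4 : ℝ) ^ s) * max 1 ((1/4 : ℝ) ^ t), by positivity, fun θ h0 h2 => ?_⟩
  have hθ0 : 0 ≤ θ := by linarith
  have hθπ : θ ≤ π := by linarith
  have hsin : sin (θ/2) ^ s ≤ max 1 ((1/4 : ℝ) ^ s) := by
    refine rpow_le_max (by norm_num) ?_ (Real.sin_le_one _)
    calc (1/4 : ℝ) = (π/4)/π := by field_simp
      _ ≤ θ/π := by gcongr
      _ ≤ sin (θ/2) := sin_half_lb hθ0 hθπ
  have hcos : cos (θ/2) ^ t ≤ max 1 ((1/4 : ℝ) ^ t) := by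
    refine rpow_le_max (by norm_num) ?_ (Real.cos_le_one _)
    calc (1/4 : ℝ) = (π - 3*π/4)/π := by field_simp; ring
      _ ≤ (π - θ)/π := by gcongr <;> linarith
      _ ≤ cos (θ/2) := cos_half_lb hθ0 hθπ
  exact mul_le_mul hsin hcos (Real.rpow_nonneg (cos_half_nonneg hθ0 hθπ) t) (by positivity)

lemma left_bound1 (s t : ℝ) (hs : -1 < s) : ∃ K : ℝ, 0 < K ∧ ∀ a b : ℝ, 0 ≤ a → a ≤ b → b ≤ π/2 →
    (∫⁻ θ in Ioo a b, ENNReal.ofReal (sin (θ/2) ^ s * cos (θ/2) ^ t)) ≤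
      ENNReal.ofReal (K * b ^ (s+1)) := by
  obtain ⟨C, hC, hCpt⟩ := weight_pt_left s t
  have hs1 : (0:ℝ) < s + 1 := by linarith
  refine ⟨C / (s+1), by positivity, fun a b ha hab hb => ?_⟩
  calc (∫⁻ θ in Ioo a b, ENNReal.ofReal (sin (θ/2) ^ s * cos (θ/2) ^ t))
      ≤ ∫⁻ θ in Ioo a b, ENNReal.ofReal (C * θ ^ s) :=
        setLIntegral_mono' measurableSet_Ioo fun θ hθ =>
          ENNReal.ofReal_le_ofReal (hCpt θ (lt_of_le_of_lt ha hθ.1) (hθ.2.le.trans hb))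
    _ = ENNReal.ofReal C * ∫⁻ θ in Ioo a b, ENNReal.ofReal (θ ^ s) :=
        lint_ofReal_const_mul hC.le _
    _ ≤ ENNReal.ofReal C * ENNReal.ofReal (b ^ (s+1) / (s+1)) :=
        mul_le_mul_right (lint_rpow_le s hs ha hab) _
    _ = ENNReal.ofReal (C / (s+1) * b ^ (s+1)) := by
        rw [← ENNReal.ofReal_mul hC.le]; congr 1; ring

lemma left_bound2 (s t : ℝ) : ∃ K : ℝ, 0 < K ∧ ∀ a b : ℝ, 0 < a → a ≤ b → b ≤ π/2 → b ≤ 2*a →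
    (∫⁻ θ in Ioo a b, ENNReal.ofReal (sin (θ/2) ^ s * cos (θ/2) ^ t)) ≤
      ENNReal.ofReal (K * ((b - a) * a ^ s)) := by
  obtain ⟨C, hC, hCpt⟩ := weight_pt_left s t
  refine ⟨C * max 1 (2 ^ s), by positivity, fun a b ha hab hb h2a => ?_⟩
  have has : (0:ℝ) ≤ a ^ s := Real.rpow_nonneg ha.le s
  have h := lint_le_const (f := fun θ => sin (θ/2) ^ s * cos (θ/2) ^ t)
    (M := C * max 1 (2 ^ s) * a ^ s) hab (by positivity) ?_
  · calc (∫⁻ θ in Ioo a b, ENNReal.ofReal (sin (θ/2) ^ s * cos (θ/2) ^ t))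
        ≤ ENNReal.ofReal (C * max 1 (2 ^ s) * a ^ s * (b - a)) := h
      _ = ENNReal.ofReal (C * max 1 (2 ^ s) * ((b - a) * a ^ s)) := by congr 1; ring
  · intro θ hθ
    calc sin (θ/2) ^ s * cos (θ/2) ^ t ≤ C * θ ^ s :=
          hCpt θ (ha.trans hθ.1) (hθ.2.le.trans hb)
      _ ≤ C * (max 1 (2 ^ s) * a ^ s) :=
          mul_le_mul_of_nonneg_left (rpow_comparable ha hθ.1.le (hθ.2.le.trans h2a)) hC.le
      _ = C * max 1 (2 ^ s) * a ^ s := by ring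

lemma right_bound1 (s t : ℝ) (ht : -1 < t) : ∃ K : ℝ, 0 < K ∧ ∀ a b : ℝ, π/2 ≤ a → a ≤ b → b ≤ π →
    (∫⁻ θ in Ioo a b, ENNReal.ofReal (sin (θ/2) ^ s * cos (θ/2) ^ t)) ≤
      ENNReal.ofReal (K * (π - a) ^ (t+1)) := by
  obtain ⟨C, hC, hCpt⟩ := weight_pt_right s t
  have ht1 : (0:ℝ) < t + 1 := by linarith
  refine ⟨C / (t+1), by positivity, fun a b ha hab hb => ?_⟩
  calc (∫⁻ θ in Ioo a b, ENNReal.ofReal (sin (θ/2) ^ s * cos (θ/2) ^ t))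
      ≤ ∫⁻ θ in Ioo a b, ENNReal.ofReal (C * (π - θ) ^ t) :=
        setLIntegral_mono' measurableSet_Ioo fun θ hθ =>
          ENNReal.ofReal_le_ofReal (hCpt θ (ha.trans hθ.1.le) (lt_of_lt_of_le hθ.2 hb))
    _ = ENNReal.ofReal C * ∫⁻ θ in Ioo a b, ENNReal.ofReal ((π - θ) ^ t) :=
        lint_ofReal_const_mul hC.le _
    _ ≤ ENNReal.ofReal C * ENNReal.ofReal ((π - a) ^ (t+1) / (t+1)) :=
        mul_le_mul_right (lint_rpow_ref_le t ht hab hb) _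
    _ = ENNReal.ofReal (C / (t+1) * (π - a) ^ (t+1)) := by
        rw [← ENNReal.ofReal_mul hC.le]; congr 1; ring

lemma right_bound2 (s t : ℝ) : ∃ K : ℝ, 0 < K ∧ ∀ a b : ℝ, π/2 ≤ a → a ≤ b → b < π →
    π - a ≤ 2*(π - b) →
    (∫⁻ θ in Ioo a b, ENNReal.ofReal (sin (θ/2) ^ s * cos (θ/2) ^ t)) ≤
      ENNReal.ofReal (K * ((b - a) * (π - b) ^ t)) := by
  obtain ⟨C, hC, hCpt⟩ := weight_pt_right s t
  refine ⟨C * max 1 (2 ^ t), by positivity, fun a b ha hab hb h2a => ?_⟩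
  have hρ : (0:ℝ) < π - b := by linarith
  have has : (0:ℝ) ≤ (π - b) ^ t := Real.rpow_nonneg hρ.le t
  have h := lint_le_const (f := fun θ => sin (θ/2) ^ s * cos (θ/2) ^ t)
    (M := C * max 1 (2 ^ t) * (π - b) ^ t) hab (by positivity) ?_
  · calc (∫⁻ θ in Ioo a b, ENNReal.ofReal (sin (θ/2) ^ s * cos (θ/2) ^ t))
        ≤ ENNReal.ofReal (C * max 1 (2 ^ t) * (π - b) ^ t * (b - a)) := h
      _ = ENNReal.ofReal (C * max 1 (2 ^ t) * ((b - a) * (π - b) ^ t)) := by congr 1; ring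
  · intro θ hθ
    calc sin (θ/2) ^ s * cos (θ/2) ^ t ≤ C * (π - θ) ^ t :=
          hCpt θ (ha.trans hθ.1.le) (hθ.2.trans hb)
      _ ≤ C * (max 1 (2 ^ t) * (π - b) ^ t) := by
          refine mul_le_mul_of_nonneg_left (rpow_comparable hρ (by linarith [hθ.2]) ?_) hC.le
          linarith [hθ.1]
      _ = C * max 1 (2 ^ t) * (π - b) ^ t := by ring

lemma mid_bound (s t : ℝ) : ∃ K : ℝ, 0 < K ∧ ∀ a b : ℝ, π/4 ≤ a → a ≤ b → b ≤ 3*π/4 →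
    (∫⁻ θ in Ioo a b, ENNReal.ofReal (sin (θ/2) ^ s * cos (θ/2) ^ t)) ≤
      ENNReal.ofReal (K * (b - a)) := by
  obtain ⟨C, hC, hCpt⟩ := weight_pt_mid s t
  exact ⟨C, hC, fun a b ha hab hb => lint_le_const hab hC.le fun θ hθ =>
    hCpt θ (ha.trans hθ.1.le) (hθ.2.le.trans hb)⟩

lemma real_case1 {K1 K2 u L r1 r2 m1 m2 τ : ℝ} (hK1 : 0 ≤ K1) (hK2 : 0 ≤ K2)
    (hu : 0 ≤ u) (hu2 : u ≤ 2*L) (hL : 0 < L) (hLπ : L ≤ π)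
    (hr1 : 0 ≤ r1) (hr2 : 0 ≤ r2) (hm1 : 0 ≤ m1) (hm2 : 0 ≤ m2)
    (hτ : 0 < τ) (hE : τ ≤ m1*r1 + m2*r2) :
    (K1 * u ^ m1) ^ r1 * (K2 * u ^ m2) ^ r2 ≤
      (K1 ^ r1 * K2 ^ r2 * (2*π) ^ (m1*r1 + m2*r2 - τ) * 2 ^ τ) * L ^ τ := by
  have h2L : (0:ℝ) < 2*L := by linarith
  have hπ := Real.pi_pos
  have hLτ : (0:ℝ) ≤ L ^ τ := Real.rpow_nonneg hL.le τ
  calc (K1 * u ^ m1) ^ r1 * (K2 * u ^ m2) ^ r2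
      ≤ (K1 * (2*L) ^ m1) ^ r1 * (K2 * (2*L) ^ m2) ^ r2 := by
        refine mul_le_mul (Real.rpow_le_rpow (by positivity) ?_ hr1)
          (Real.rpow_le_rpow (by positivity) ?_ hr2) (by positivity) (by positivity)
        · exact mul_le_mul_of_nonneg_left (Real.rpow_le_rpow hu hu2 hm1) hK1
        · exact mul_le_mul_of_nonneg_left (Real.rpow_le_rpow hu hu2 hm2) hK2
    _ = K1 ^ r1 * K2 ^ r2 * ((2*L) ^ (m1*r1) * (2*L) ^ (m2*r2)) := by
        rw [Real.mul_rpow hK1 (Real.rpow_nonneg h2L.le _),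
          Real.mul_rpow hK2 (Real.rpow_nonneg h2L.le _),
          ← Real.rpow_mul h2L.le, ← Real.rpow_mul h2L.le]
        ring
    _ = K1 ^ r1 * K2 ^ r2 * (2*L) ^ (m1*r1 + m2*r2) := by rw [← Real.rpow_add h2L]
    _ ≤ K1 ^ r1 * K2 ^ r2 * ((2*π) ^ (m1*r1 + m2*r2 - τ) * (2*L) ^ τ) := by
        refine mul_le_mul_of_nonneg_left (pad h2L (by linarith) hτ hE) (by positivity)
    _ = (K1 ^ r1 * K2 ^ r2 * (2*π) ^ (m1*r1 + m2*r2 - τ) * 2 ^ τ) * L ^ τ := by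
        rw [Real.mul_rpow (by norm_num : (0:ℝ) ≤ 2) hL.le]; ring

lemma real_case2 {K1 K2 a L r1 r2 e1 e2 τ : ℝ} (hK1 : 0 ≤ K1) (hK2 : 0 ≤ K2)
    (hL : 0 < L) (hLa : L ≤ a) (haπ : a ≤ π)
    (hr1 : 0 ≤ r1) (hr2 : 0 ≤ r2) (hτ : 0 < τ)
    (hE1 : τ ≤ r1 + r2 + (e1*r1 + e2*r2)) (hE0 : τ ≤ r1 + r2) :
    (K1 * (L * a ^ e1)) ^ r1 * (K2 * (L * a ^ e2)) ^ r2 ≤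
      (K1 ^ r1 * K2 ^ r2 *
        (π ^ (r1 + r2 + (e1*r1 + e2*r2) - τ) + π ^ (e1*r1 + e2*r2) * π ^ (r1 + r2 - τ))) * L ^ τ := by
  have ha : 0 < a := hL.trans_le hLa
  have hLπ : L ≤ π := hLa.trans haπ
  have hπ := Real.pi_pos
  have hLτ : (0:ℝ) ≤ L ^ τ := Real.rpow_nonneg hL.le τ
  have hKK : (0:ℝ) ≤ K1 ^ r1 * K2 ^ r2 := by positivity
  have expand : (K1 * (L * a ^ e1)) ^ r1 * (K2 * (L * a ^ e2)) ^ r2 =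
      K1 ^ r1 * K2 ^ r2 * (L ^ (r1 + r2) * a ^ (e1*r1 + e2*r2)) := by
    rw [Real.mul_rpow hK1 (by positivity), Real.mul_rpow hK2 (by positivity),
      Real.mul_rpow hL.le (Real.rpow_nonneg ha.le _),
      Real.mul_rpow hL.le (Real.rpow_nonneg ha.le _),
      ← Real.rpow_mul ha.le, ← Real.rpow_mul ha.le,
      Real.rpow_add hL, Real.rpow_add ha]
    ring
  rw [expand]
  rcases le_or_gt (e1*r1 + e2*r2) 0 with hF | hF
  · have h1 : a ^ (e1*r1 + e2*r2) ≤ L ^ (e1*r1 + e2*r2) :=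
      Real.rpow_le_rpow_of_nonpos hL hLa hF
    have h2 : L ^ (r1 + r2) * a ^ (e1*r1 + e2*r2) ≤ L ^ (r1 + r2 + (e1*r1 + e2*r2)) :=
      calc L ^ (r1 + r2) * a ^ (e1*r1 + e2*r2)
          ≤ L ^ (r1 + r2) * L ^ (e1*r1 + e2*r2) :=
            mul_le_mul_of_nonneg_left h1 (Real.rpow_nonneg hL.le _)
        _ = L ^ (r1 + r2 + (e1*r1 + e2*r2)) := (Real.rpow_add hL _ _).symm
    have h3 : L ^ (r1 + r2 + (e1*r1 + e2*r2)) ≤ π ^ (r1 + r2 + (e1*r1 + e2*r2) - τ) * L ^ τ :=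
      pad hL hLπ hτ hE1
    have h4 : (0:ℝ) ≤ π ^ (e1*r1 + e2*r2) * π ^ (r1 + r2 - τ) := by positivity
    calc K1 ^ r1 * K2 ^ r2 * (L ^ (r1 + r2) * a ^ (e1*r1 + e2*r2))
        ≤ K1 ^ r1 * K2 ^ r2 * (π ^ (r1 + r2 + (e1*r1 + e2*r2) - τ) * L ^ τ) :=
          mul_le_mul_of_nonneg_left (h2.trans h3) hKK
      _ ≤ _ := by nlinarith [mul_nonneg hKK hLτ, mul_nonneg (mul_nonneg hKK h4) hLτ]
  · have h1 : a ^ (e1*r1 + e2*r2) ≤ π ^ (e1*r1 + e2*r2) :=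
      Real.rpow_le_rpow ha.le haπ hF.le
    have h2 : L ^ (r1 + r2) ≤ π ^ (r1 + r2 - τ) * L ^ τ := pad hL hLπ hτ hE0
    have h5 : L ^ (r1 + r2) * a ^ (e1*r1 + e2*r2) ≤
        (π ^ (e1*r1 + e2*r2) * π ^ (r1 + r2 - τ)) * L ^ τ := by
      calc L ^ (r1 + r2) * a ^ (e1*r1 + e2*r2)
          ≤ (π ^ (r1 + r2 - τ) * L ^ τ) * π ^ (e1*r1 + e2*r2) :=
            mul_le_mul h2 h1 (Real.rpow_nonneg ha.le _) (by positivity)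
        _ = (π ^ (e1*r1 + e2*r2) * π ^ (r1 + r2 - τ)) * L ^ τ := by ring
    have h6 : (0:ℝ) ≤ π ^ (r1 + r2 + (e1*r1 + e2*r2) - τ) := by positivity
    calc K1 ^ r1 * K2 ^ r2 * (L ^ (r1 + r2) * a ^ (e1*r1 + e2*r2))
        ≤ K1 ^ r1 * K2 ^ r2 * ((π ^ (e1*r1 + e2*r2) * π ^ (r1 + r2 - τ)) * L ^ τ) :=
          mul_le_mul_of_nonneg_left h5 hKK
      _ ≤ _ := by nlinarith [mul_nonneg hKK hLτ]
end PWTaux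

open PWTaux in
set_option maxHeartbeats 4000000 in
/-- The two-weight testing condition for the power weights
`w(θ) = (sin(θ/2))^{(2α+1)(1-q/2)}(cos(θ/2))^{(2β+1)(1-q/2)}` and
`v̄(θ) = (sin(θ/2))^{(2α+1)(1-p/2)(-1/(p-1))}(cos(θ/2))^{(2β+1)(1-p/2)(-1/(p-1))}`:
`w(I)^{1/q} v̄(I)^{(p-1)/p} ≤ C |I|^{1-σ}` for every interval `I ⊂ (0,π)`. -/
theorem power_weights_testing_condition (σ α β p q : ℝ) (hσ0 : 0 < σ) (hσ1 : σ < 1)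
    (hα : -(1/2) ≤ α) (hβ : -(1/2) ≤ β)
    (hp : max ((2*α+2)/(α+3/2)) ((2*β+2)/(β+3/2)) < p) (hpq : p ≤ q)
    (hq : q < min ((2*α+2)/(α+1/2)) ((2*β+2)/(β+1/2)))
    (hσpq : 1/q ≥ 1/p - min (σ/(2*α+2)) (σ/(2*β+2))) :
    ∃ C : ℝ, 0 < C ∧ ∀ a b : ℝ, 0 ≤ a → a ≤ b → b ≤ π →
      (∫⁻ θ in Ioo a b, ENNReal.ofReal ((Real.sin (θ/2)) ^ ((2*α+1)*(1 - q/2)) *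
          (Real.cos (θ/2)) ^ ((2*β+1)*(1 - q/2)))) ^ (1/q) *
        (∫⁻ θ in Ioo a b, ENNReal.ofReal ((Real.sin (θ/2)) ^ ((2*α+1)*(1 - p/2)*(-1/(p-1))) *
          (Real.cos (θ/2)) ^ ((2*β+1)*(1 - p/2)*(-1/(p-1))))) ^ ((p-1)/p) ≤
        ENNReal.ofReal (C * (b - a) ^ (1 - σ)) := by
  have hπ := Real.pi_pos
  have hα32 : (0:ℝ) < α + 3/2 := by linarith
  have hβ32 : (0:ℝ) < β + 3/2 := by linarith
  have hmaxα : (1:ℝ) ≤ (2*α+2)/(α+3/2) := by rw [le_div_iff₀ hα32]; linarith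
  have hp1 : 1 < p := lt_of_le_of_lt (hmaxα.trans (le_max_left _ _)) hp
  have hq1 : 1 < q := hp1.trans_le hpq
  have hp0 : (0:ℝ) < p := by linarith
  have hq0 : (0:ℝ) < q := by linarith
  have hpm1 : (0:ℝ) < p - 1 := by linarith
  have hα' : -(1/2:ℝ) < α := by
    rcases hα.lt_or_eq with h | h; · exact h
    exfalso
    have h1 : (2*α+2)/(α+1/2) = 0 := by rw [← h]; norm_num
    have h2 : q < 0 := lt_of_lt_of_le hq (h1 ▸ min_le_left _ _)
    linarith
  have hβ' : -(1/2:ℝ) < β := by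
    rcases hβ.lt_or_eq with h | h; · exact h
    exfalso
    have h1 : (2*β+2)/(β+1/2) = 0 := by rw [← h]; norm_num
    have h2 : q < 0 := lt_of_lt_of_le hq (h1 ▸ min_le_right _ _)
    linarith
  have hα2 : (0:ℝ) < α + 1/2 := by linarith
  have hβ2 : (0:ℝ) < β + 1/2 := by linarith
  set s₁ := (2*α+1)*(1 - q/2) with hs₁d
  set t₁ := (2*β+1)*(1 - q/2) with ht₁d
  set s₂ := (2*α+1)*(1 - p/2)*(-1/(p-1)) with hs₂d
  set t₂ := (2*β+1)*(1 - p/2)*(-1/(p-1)) with ht₂d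
  have hqa : q*(α+1/2) < 2*α+2 := (lt_div_iff₀ hα2).mp (lt_of_lt_of_le hq (min_le_left _ _))
  have hqb : q*(β+1/2) < 2*β+2 := (lt_div_iff₀ hβ2).mp (lt_of_lt_of_le hq (min_le_right _ _))
  have hs₁ : -1 < s₁ := by rw [hs₁d]; nlinarith
  have ht₁ : -1 < t₁ := by rw [ht₁d]; nlinarith
  have hpa : 2*α+2 < p*(α+3/2) := (div_lt_iff₀ hα32).mp (lt_of_le_of_lt (le_max_left _ _) hp)
  have hpb : 2*β+2 < p*(β+3/2) := (div_lt_iff₀ hβ32).mp (lt_of_le_of_lt (le_max_right _ _) hp)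
  have hs₂ : -1 < s₂ := by
    have key : s₂ + 1 = (p*(2*α+3) - (4*α+4))/(2*(p-1)) := by
      rw [hs₂d]; field_simp; ring
    have hpos : 0 < (p*(2*α+3) - (4*α+4))/(2*(p-1)) := div_pos (by nlinarith [hpa]) (by linarith)
    have : 0 < s₂ + 1 := by rw [key]; exact hpos
    linarith
  have ht₂ : -1 < t₂ := by
    have key : t₂ + 1 = (p*(2*β+3) - (4*β+4))/(2*(p-1)) := by
      rw [ht₂d]; field_simp; ring
    have hpos : 0 < (p*(2*β+3) - (4*β+4))/(2*(p-1)) := div_pos (by nlinarith [hpb]) (by linarith)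
    have : 0 < t₂ + 1 := by rw [key]; exact hpos
    linarith
  have hr1 : (0:ℝ) < 1/q := by positivity
  have hr2 : (0:ℝ) < (p-1)/p := by positivity
  have hτ0 : (0:ℝ) < 1 - σ := by linarith
  have hd1 : 1/p - σ/(2*α+2) ≤ 1/q := by
    have := min_le_left (σ/(2*α+2)) (σ/(2*β+2)); linarith
  have hd2 : 1/p - σ/(2*β+2) ≤ 1/q := by
    have := min_le_right (σ/(2*α+2)) (σ/(2*β+2)); linarith
  have hEA : 1 - σ ≤ (s₁+1)*(1/q) + (s₂+1)*((p-1)/p) := by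
    have hid : (s₁+1)*(1/q) + (s₂+1)*((p-1)/p) = 1 + (2*α+2)*(1/q - 1/p) := by
      rw [hs₁d, hs₂d]; field_simp; ring
    rw [hid]
    have h2 : (0:ℝ) < 2*α+2 := by linarith
    have h3 : σ/(2*α+2)*(2*α+2) = σ := div_mul_cancel₀ _ (ne_of_gt h2)
    nlinarith [mul_le_mul_of_nonneg_right hd1 h2.le]
  have hEB : 1 - σ ≤ (t₁+1)*(1/q) + (t₂+1)*((p-1)/p) := by
    have hid : (t₁+1)*(1/q) + (t₂+1)*((p-1)/p) = 1 + (2*β+2)*(1/q - 1/p) := by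
      rw [ht₁d, ht₂d]; field_simp; ring
    rw [hid]
    have h2 : (0:ℝ) < 2*β+2 := by linarith
    have h3 : σ/(2*β+2)*(2*β+2) = σ := div_mul_cancel₀ _ (ne_of_gt h2)
    nlinarith [mul_le_mul_of_nonneg_right hd2 h2.le]
  have hE0 : 1 - σ ≤ 1/q + (p-1)/p := by
    have h5 : σ/(2*α+2) ≤ σ := div_le_self hσ0.le (by linarith)
    have hpp : (p-1)/p = 1 - 1/p := by field_simp
    rw [hpp]; linarith
  have hEA' : 1 - σ ≤ 1/q + (p-1)/p + (s₁*(1/q) + s₂*((p-1)/p)) := by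
    have hid : (s₁+1)*(1/q) + (s₂+1)*((p-1)/p)
        = 1/q + (p-1)/p + (s₁*(1/q) + s₂*((p-1)/p)) := by ring
    linarith [hEA]
  have hEB' : 1 - σ ≤ 1/q + (p-1)/p + (t₁*(1/q) + t₂*((p-1)/p)) := by
    have hid : (t₁+1)*(1/q) + (t₂+1)*((p-1)/p)
        = 1/q + (p-1)/p + (t₁*(1/q) + t₂*((p-1)/p)) := by ring
    linarith [hEB]
  obtain ⟨K1, hK1, hB1⟩ := left_bound1 s₁ t₁ hs₁
  obtain ⟨K2, hK2, hB2⟩ := left_bound1 s₂ t₂ hs₂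
  obtain ⟨K3, hK3, hB3⟩ := left_bound2 s₁ t₁
  obtain ⟨K4, hK4, hB4⟩ := left_bound2 s₂ t₂
  obtain ⟨K5, hK5, hB5⟩ := right_bound1 s₁ t₁ ht₁
  obtain ⟨K6, hK6, hB6⟩ := right_bound1 s₂ t₂ ht₂
  obtain ⟨K7, hK7, hB7⟩ := right_bound2 s₁ t₁
  obtain ⟨K8, hK8, hB8⟩ := right_bound2 s₂ t₂
  obtain ⟨K9, hK9, hB9⟩ := mid_bound s₁ t₁
  obtain ⟨K10, hK10, hB10⟩ := mid_bound s₂ t₂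
  set M1 := K1 * (π/2) ^ (s₁+1) + K9 * (π/2) + K5 * (π/2) ^ (t₁+1) with hM1d
  set M2 := K2 * (π/2) ^ (s₂+1) + K10 * (π/2) + K6 * (π/2) ^ (t₂+1) with hM2d
  have hM1pos : 0 < M1 := by rw [hM1d]; positivity
  have hM2pos : 0 < M2 := by rw [hM2d]; positivity
  have cover : Ioo (0:ℝ) π ⊆ (Ioo 0 (π/2) ∪ Ioo (π/4) (3*π/4)) ∪ Ioo (π/2) π := by
    intro x hx
    rcases lt_trichotomy x (π/2) with h | h | h
    · exact Or.inl (Or.inl ⟨hx.1, h⟩)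
    · refine Or.inl (Or.inr ⟨?_, ?_⟩) <;> rw [h] <;> linarith
    · exact Or.inr ⟨h, hx.2⟩
  have hM1b : ∀ a b : ℝ, 0 ≤ a → a ≤ b → b ≤ π →
      (∫⁻ θ in Ioo a b, ENNReal.ofReal (sin (θ/2) ^ s₁ * cos (θ/2) ^ t₁)) ≤
        ENNReal.ofReal M1 := by
    intro a b ha hab hb
    have hsub : Ioo a b ⊆ (Ioo 0 (π/2) ∪ Ioo (π/4) (3*π/4)) ∪ Ioo (π/2) π :=
      fun x hx => cover ⟨lt_of_le_of_lt ha hx.1, lt_of_lt_of_le hx.2 hb⟩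
    calc (∫⁻ θ in Ioo a b, ENNReal.ofReal (sin (θ/2) ^ s₁ * cos (θ/2) ^ t₁))
        ≤ ∫⁻ θ in (Ioo 0 (π/2) ∪ Ioo (π/4) (3*π/4)) ∪ Ioo (π/2) π,
            ENNReal.ofReal (sin (θ/2) ^ s₁ * cos (θ/2) ^ t₁) := lintegral_mono_set hsub
      _ ≤ (∫⁻ θ in Ioo 0 (π/2) ∪ Ioo (π/4) (3*π/4),
            ENNReal.ofReal (sin (θ/2) ^ s₁ * cos (θ/2) ^ t₁)) +
          ∫⁻ θ in Ioo (π/2) π, ENNReal.ofReal (sin (θ/2) ^ s₁ * cos (θ/2) ^ t₁) :=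
            lintegral_union_le _ _ _
      _ ≤ ((∫⁻ θ in Ioo 0 (π/2), ENNReal.ofReal (sin (θ/2) ^ s₁ * cos (θ/2) ^ t₁)) +
          ∫⁻ θ in Ioo (π/4) (3*π/4), ENNReal.ofReal (sin (θ/2) ^ s₁ * cos (θ/2) ^ t₁)) +
          ∫⁻ θ in Ioo (π/2) π, ENNReal.ofReal (sin (θ/2) ^ s₁ * cos (θ/2) ^ t₁) :=
            add_le_add_left (lintegral_union_le _ _ _) _
      _ ≤ (ENNReal.ofReal (K1 * (π/2) ^ (s₁+1)) + ENNReal.ofReal (K9 * (3*π/4 - π/4))) +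
          ENNReal.ofReal (K5 * (π - π/2) ^ (t₁+1)) := by
            refine add_le_add (add_le_add ?_ ?_) ?_
            · exact hB1 0 (π/2) le_rfl (by linarith) le_rfl
            · exact hB9 (π/4) (3*π/4) le_rfl (by linarith) le_rfl
            · exact hB5 (π/2) π le_rfl (by linarith) le_rfl
      _ = ENNReal.ofReal M1 := by
            rw [show 3*π/4 - π/4 = π/2 by ring, show π - π/2 = π/2 by ring,
              ← ENNReal.ofReal_add (by positivity) (by positivity),
              ← ENNReal.ofReal_add (by positivity) (by positivity), hM1d]
  have hM2b : ∀ a b : ℝ, 0 ≤ a → a ≤ b → b ≤ π →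
      (∫⁻ θ in Ioo a b, ENNReal.ofReal (sin (θ/2) ^ s₂ * cos (θ/2) ^ t₂)) ≤
        ENNReal.ofReal M2 := by
    intro a b ha hab hb
    have hsub : Ioo a b ⊆ (Ioo 0 (π/2) ∪ Ioo (π/4) (3*π/4)) ∪ Ioo (π/2) π :=
      fun x hx => cover ⟨lt_of_le_of_lt ha hx.1, lt_of_lt_of_le hx.2 hb⟩
    calc (∫⁻ θ in Ioo a b, ENNReal.ofReal (sin (θ/2) ^ s₂ * cos (θ/2) ^ t₂))
        ≤ ∫⁻ θ in (Ioo 0 (π/2) ∪ Ioo (π/4) (3*π/4)) ∪ Ioo (π/2) π,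
            ENNReal.ofReal (sin (θ/2) ^ s₂ * cos (θ/2) ^ t₂) := lintegral_mono_set hsub
      _ ≤ (∫⁻ θ in Ioo 0 (π/2) ∪ Ioo (π/4) (3*π/4),
            ENNReal.ofReal (sin (θ/2) ^ s₂ * cos (θ/2) ^ t₂)) +
          ∫⁻ θ in Ioo (π/2) π, ENNReal.ofReal (sin (θ/2) ^ s₂ * cos (θ/2) ^ t₂) :=
            lintegral_union_le _ _ _
      _ ≤ ((∫⁻ θ in Ioo 0 (π/2), ENNReal.ofReal (sin (θ/2) ^ s₂ * cos (θ/2) ^ t₂)) +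
          ∫⁻ θ in Ioo (π/4) (3*π/4), ENNReal.ofReal (sin (θ/2) ^ s₂ * cos (θ/2) ^ t₂)) +
          ∫⁻ θ in Ioo (π/2) π, ENNReal.ofReal (sin (θ/2) ^ s₂ * cos (θ/2) ^ t₂) :=
            add_le_add_left (lintegral_union_le _ _ _) _
      _ ≤ (ENNReal.ofReal (K2 * (π/2) ^ (s₂+1)) + ENNReal.ofReal (K10 * (3*π/4 - π/4))) +
          ENNReal.ofReal (K6 * (π - π/2) ^ (t₂+1)) := by
            refine add_le_add (add_le_add ?_ ?_) ?_
            · exact hB2 0 (π/2) le_rfl (by linarith) le_rfl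
            · exact hB10 (π/4) (3*π/4) le_rfl (by linarith) le_rfl
            · exact hB6 (π/2) π le_rfl (by linarith) le_rfl
      _ = ENNReal.ofReal M2 := by
            rw [show 3*π/4 - π/4 = π/2 by ring, show π - π/2 = π/2 by ring,
              ← ENNReal.ofReal_add (by positivity) (by positivity),
              ← ENNReal.ofReal_add (by positivity) (by positivity), hM2d]
  -- the six case constants
  set c1 := K1 ^ (1/q) * K2 ^ ((p-1)/p) *
      (2*π) ^ ((s₁+1)*(1/q) + (s₂+1)*((p-1)/p) - (1-σ)) * 2 ^ (1-σ) with hc1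
  set c2 := K3 ^ (1/q) * K4 ^ ((p-1)/p) *
      (π ^ (1/q + (p-1)/p + (s₁*(1/q) + s₂*((p-1)/p)) - (1-σ)) +
        π ^ (s₁*(1/q) + s₂*((p-1)/p)) * π ^ (1/q + (p-1)/p - (1-σ))) with hc2
  set c3 := K5 ^ (1/q) * K6 ^ ((p-1)/p) *
      (2*π) ^ ((t₁+1)*(1/q) + (t₂+1)*((p-1)/p) - (1-σ)) * 2 ^ (1-σ) with hc3
  set c4 := K7 ^ (1/q) * K8 ^ ((p-1)/p) *
      (π ^ (1/q + (p-1)/p + (t₁*(1/q) + t₂*((p-1)/p)) - (1-σ)) +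
        π ^ (t₁*(1/q) + t₂*((p-1)/p)) * π ^ (1/q + (p-1)/p - (1-σ))) with hc4
  set c5 := K9 ^ (1/q) * K10 ^ ((p-1)/p) *
      (2*π) ^ (1*(1/q) + 1*((p-1)/p) - (1-σ)) * 2 ^ (1-σ) with hc5
  set c6 := M1 ^ (1/q) * M2 ^ ((p-1)/p) * (4/π) with hc6
  have hc1p : 0 < c1 := by rw [hc1]; positivity
  have hc2p : 0 < c2 := by rw [hc2]; positivity
  have hc3p : 0 < c3 := by rw [hc3]; positivity
  have hc4p : 0 < c4 := by rw [hc4]; positivity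
  have hc5p : 0 < c5 := by rw [hc5]; positivity
  have hc6p : 0 < c6 := by rw [hc6]; positivity
  refine ⟨c1 + c2 + c3 + c4 + c5 + c6, by linarith only [hc1p, hc2p, hc3p, hc4p, hc5p, hc6p], fun a b ha hab hb => ?_⟩
  rcases hab.lt_or_eq with hab' | rfl
  swap
  · simp only [Set.Ioo_self, Measure.restrict_empty, lintegral_zero_measure]
    rw [ENNReal.zero_rpow_of_pos hr1, zero_mul]
    exact zero_le
  have hL0 : (0:ℝ) < b - a := by linarith only [hab']
  have hLπ : b - a ≤ π := by linarith only [ha, hb]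
  have hb0 : (0:ℝ) ≤ b := ha.trans hab
  have hLτ : (0:ℝ) ≤ (b - a) ^ (1-σ) := Real.rpow_nonneg hL0.le _
  rcases le_or_gt b (π/2) with hbhalf | hbhalf
  · -- left region
    rcases le_or_gt a (b - a) with hsmall | hbig
    · -- i-1 : b ≤ 2(b-a)
      have hw := hB1 a b ha hab hbhalf
      have hv := hB2 a b ha hab hbhalf
      refine le_trans (combine hw hv hr1.le hr2.le (by positivity) (by positivity))
        (ENNReal.ofReal_le_ofReal ?_)
      have hreal := real_case1 (u := b) (L := b - a) hK1.le hK2.le hb0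
        (by linarith only [hsmall]) hL0 hLπ
        hr1.le hr2.le (by linarith only [hs₁] : (0:ℝ) ≤ s₁+1)
        (by linarith only [hs₂] : (0:ℝ) ≤ s₂+1) hτ0 hEA
      refine hreal.trans (mul_le_mul_of_nonneg_right ?_ hLτ)
      rw [← hc1]
      linarith only [hc1p, hc2p, hc3p, hc4p, hc5p, hc6p]
    · -- i-2 : a > b - a
      have ha0 : (0:ℝ) < a := lt_trans hL0 hbig
      have h2a : b ≤ 2*a := by linarith only [hbig]
      have hw := hB3 a b ha0 hab hbhalf h2a
      have hv := hB4 a b ha0 hab hbhalf h2a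
      refine le_trans (combine hw hv hr1.le hr2.le (by positivity) (by positivity))
        (ENNReal.ofReal_le_ofReal ?_)
      have hreal := real_case2 (a := a) (L := b - a) (e1 := s₁) (e2 := s₂)
        hK3.le hK4.le hL0 (by linarith only [hbig]) (by linarith only [hab, hb])
        hr1.le hr2.le hτ0 hEA' hE0
      refine hreal.trans (mul_le_mul_of_nonneg_right ?_ hLτ)
      rw [← hc2]
      linarith only [hc1p, hc2p, hc3p, hc4p, hc5p, hc6p]
  rcases le_or_gt (π/2) a with hahalf | hahalf
  · -- right region
    rcases le_or_gt (π - a) (2*(b - a)) with hsmall | hbig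
    · -- ii-1
      have hw := hB5 a b hahalf hab hb
      have hv := hB6 a b hahalf hab hb
      refine le_trans (combine hw hv hr1.le hr2.le
        (mul_nonneg hK5.le (Real.rpow_nonneg (by linarith only [hab, hb]) _))
        (mul_nonneg hK6.le (Real.rpow_nonneg (by linarith only [hab, hb]) _)))
        (ENNReal.ofReal_le_ofReal ?_)
      have hreal := real_case1 (u := π - a) (L := b - a) hK5.le hK6.le
        (by linarith only [hab, hb])
        hsmall hL0 hLπ hr1.le hr2.le (by linarith only [ht₁] : (0:ℝ) ≤ t₁+1)
        (by linarith only [ht₂] : (0:ℝ) ≤ t₂+1) hτ0 hEB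
      refine hreal.trans (mul_le_mul_of_nonneg_right ?_ hLτ)
      rw [← hc3]
      linarith only [hc1p, hc2p, hc3p, hc4p, hc5p, hc6p]
    · -- ii-2
      have hbπ : b < π := by linarith only [hbig, hL0]
      have hcond : π - a ≤ 2*(π - b) := by linarith only [hbig]
      have hw := hB7 a b hahalf hab hbπ hcond
      have hv := hB8 a b hahalf hab hbπ hcond
      refine le_trans (combine hw hv hr1.le hr2.le
        (mul_nonneg hK7.le (mul_nonneg hL0.le (Real.rpow_nonneg (by linarith only [hbπ]) _)))
        (mul_nonneg hK8.le (mul_nonneg hL0.le (Real.rpow_nonneg (by linarith only [hbπ]) _))))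
        (ENNReal.ofReal_le_ofReal ?_)
      have hreal := real_case2 (a := π - b) (L := b - a) (e1 := t₁) (e2 := t₂)
        hK7.le hK8.le hL0 (by linarith only [hbig]) (by linarith only [hb0])
        hr1.le hr2.le hτ0 hEB' hE0
      refine hreal.trans (mul_le_mul_of_nonneg_right ?_ hLτ)
      rw [← hc4]
      linarith only [hc1p, hc2p, hc3p, hc4p, hc5p, hc6p]
  -- crossing region : a < π/2 < b
  rcases le_or_gt (b - a) (π/4) with hsmall | hbig
  · -- iii-a
    have ha4 : π/4 ≤ a := by linarith only [hbhalf, hsmall]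
    have hb4 : b ≤ 3*π/4 := by linarith only [hahalf, hsmall]
    have hw := hB9 a b ha4 hab hb4
    have hv := hB10 a b ha4 hab hb4
    rw [show K9 * (b - a) = K9 * (b - a) ^ (1:ℝ) by rw [Real.rpow_one]] at hw
    rw [show K10 * (b - a) = K10 * (b - a) ^ (1:ℝ) by rw [Real.rpow_one]] at hv
    refine le_trans (combine hw hv hr1.le hr2.le (by positivity) (by positivity))
      (ENNReal.ofReal_le_ofReal ?_)
    have hreal := real_case1 (u := b - a) (L := b - a) (m1 := 1) (m2 := 1)
      hK9.le hK10.le hL0.le (by linarith only [hL0]) hL0 hLπ hr1.le hr2.le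
      zero_le_one zero_le_one
      hτ0 (by linarith only [hE0] : 1 - σ ≤ 1*(1/q) + 1*((p-1)/p))
    refine hreal.trans (mul_le_mul_of_nonneg_right ?_ hLτ)
    rw [← hc5]
    linarith only [hc1p, hc2p, hc3p, hc4p, hc5p, hc6p]
  · -- iii-b : long interval
    have hw := hM1b a b ha hab hb
    have hv := hM2b a b ha hab hb
    refine le_trans (combine hw hv hr1.le hr2.le hM1pos.le hM2pos.le)
      (ENNReal.ofReal_le_ofReal ?_)
    have h1 : (π/4:ℝ) ≤ (b - a) ^ (1-σ) := by
      calc (π/4:ℝ) = (π/4) ^ (1:ℝ) := (Real.rpow_one _).symm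
        _ ≤ (π/4) ^ (1-σ) := Real.rpow_le_rpow_of_exponent_ge (by positivity)
              (by linarith only [Real.pi_le_four]) (by linarith only [hσ0])
        _ ≤ (b - a) ^ (1-σ) := Real.rpow_le_rpow (by positivity) hbig.le
              (by linarith only [hσ1])
    have hMM : (0:ℝ) ≤ M1 ^ (1/q) * M2 ^ ((p-1)/p) := by positivity
    have hgoal : M1 ^ (1/q) * M2 ^ ((p-1)/p) ≤ c6 * (b - a) ^ (1-σ) := by
      rw [hc6]
      calc M1 ^ (1/q) * M2 ^ ((p-1)/p)
          = (M1 ^ (1/q) * M2 ^ ((p-1)/p) * (4/π)) * (π/4) := by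
            rw [mul_assoc, show (4/π) * (π/4) = 1 by field_simp, mul_one]
        _ ≤ (M1 ^ (1/q) * M2 ^ ((p-1)/p) * (4/π)) * ((b - a) ^ (1-σ)) :=
            mul_le_mul_of_nonneg_left h1 (by positivity)
    refine hgoal.trans (mul_le_mul_of_nonneg_right ?_ hLτ)
    linarith only [hc1p, hc2p, hc3p, hc4p, hc5p, hc6p]
end

section
/- Let 0 < σ < 1 and let α, β ≥ −1/2. Then there exists a constant C, depending only on σ (and not on α or β), such that for all 0 < s ≤ 2: ∫_0^1 sinh(t/2) · (cosh(t/2) − 1 + s)^{−(α+β+2)} · t^{σ−1} dt ≤ C · (Γ(σ/2 + 1/2) Γ(α+β+3/2−σ/2) / Γ(α+β+2)) · s^{−(α+β+3/2−σ/2)}. -/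
open Real Set MeasureTheory


lemma aux_sinh_le {t : ℝ} (h0 : 0 ≤ t) (h1 : t ≤ 1) : Real.sinh (t/2) ≤ t := by
  have h2 : Real.exp (t/2) * Real.exp (-(t/2)) = 1 := by
    rw [← Real.exp_add]; simp
  have h3 : -(t/2) + 1 ≤ Real.exp (-(t/2)) := Real.add_one_le_exp _
  have h4 : 0 < Real.exp (-(t/2)) := Real.exp_pos _
  rw [Real.sinh_eq]
  nlinarith [sq_nonneg (Real.exp (-(t/2)) - 1), sq_nonneg t]

lemma aux_cosh_ge {t : ℝ} (h0 : 0 ≤ t) : 1 + t^2/8 ≤ Real.cosh (t/2) := by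
  have h1 : Real.cosh (2 * (t/4)) = 2 * Real.sinh (t/4) ^ 2 + 1 := by
    rw [Real.cosh_two_mul, Real.cosh_sq]; ring
  have h2 : t/4 ≤ Real.sinh (t/4) := by
    rcases eq_or_lt_of_le h0 with h | h
    · simp [← h]
    · exact (Real.self_lt_sinh_iff.mpr (by linarith)).le
  have h3 : 2 * (t/4) = t/2 := by ring
  rw [← h3, h1]
  nlinarith

lemma aux_laplace {c b : ℝ} (hc : -1 < c) (hb : 0 < b) :
    ∫ x in Ioi (0:ℝ), x ^ c * Real.exp (-b * x) = b ^ (-(c+1)) * Real.Gamma (c+1) := by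
  have h := integral_rpow_mul_exp_neg_mul_rpow (p := 1) one_pos hc hb
  simp only [Real.rpow_one, div_one] at h
  rw [h]; ring

lemma aux_laplace_int {c b : ℝ} (hc : -1 < c) (hb : 0 < b) :
    IntegrableOn (fun x : ℝ => x ^ c * Real.exp (-b * x)) (Ioi (0:ℝ)) := by
  have h := integrableOn_rpow_mul_exp_neg_mul_rpow hc one_pos hb
  simpa only [Real.rpow_one] using h

lemma aux_gauss {c b : ℝ} (hc : -1 < c) (hb : 0 < b) :
    ∫ x in Ioi (0:ℝ), x ^ c * Real.exp (-b * x ^ 2) =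
      b ^ (-(c+1)/2) * (1/2) * Real.Gamma ((c+1)/2) := by
  have h := integral_rpow_mul_exp_neg_mul_rpow (p := 2) two_pos hc hb
  rw [← h]
  refine setIntegral_congr_fun measurableSet_Ioi (fun x hx => ?_)
  rw [show ((2:ℝ)) = ((2:ℕ):ℝ) by norm_num, Real.rpow_natCast]

lemma aux_gauss_int {c b : ℝ} (hc : -1 < c) (hb : 0 < b) :
    IntegrableOn (fun x : ℝ => x ^ c * Real.exp (-b * x ^ 2)) (Ioi (0:ℝ)) := by
  have h := integrableOn_rpow_mul_exp_neg_mul_rpow hc two_pos hb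
  refine h.congr_fun (fun x hx => ?_) measurableSet_Ioi
  dsimp only
  rw [show ((2:ℝ)) = ((2:ℕ):ℝ) by norm_num, Real.rpow_natCast]

lemma aux_laplace_lint {c b : ℝ} (hc : -1 < c) (hb : 0 < b) :
    (∫⁻ u in Ioi (0:ℝ), ENNReal.ofReal (u ^ c * Real.exp (-b * u))) =
      ENNReal.ofReal (b ^ (-(c+1)) * Real.Gamma (c+1)) := by
  rw [← aux_laplace hc hb,
    ← ofReal_integral_eq_lintegral_ofReal (aux_laplace_int hc hb) ?_]
  filter_upwards [ae_restrict_mem measurableSet_Ioi] with x hx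
  have : (0:ℝ) < x := hx
  positivity

lemma aux_gauss_lint {c b : ℝ} (hc : -1 < c) (hb : 0 < b) :
    (∫⁻ x in Ioi (0:ℝ), ENNReal.ofReal (x ^ c * Real.exp (-b * x ^ 2))) =
      ENNReal.ofReal (b ^ (-(c+1)/2) * (1/2) * Real.Gamma ((c+1)/2)) := by
  rw [← aux_gauss hc hb,
    ← ofReal_integral_eq_lintegral_ofReal (aux_gauss_int hc hb) ?_]
  filter_upwards [ae_restrict_mem measurableSet_Ioi] with x hx
  have : (0:ℝ) < x := hx
  positivity

lemma aux_rep {a x : ℝ} (ha : 0 < a) (hx : 0 < x) :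
    ENNReal.ofReal (x ^ (-a)) = (ENNReal.ofReal (Real.Gamma a))⁻¹ *
      ∫⁻ u in Ioi (0:ℝ), ENNReal.ofReal (u ^ (a-1) * Real.exp (-x * u)) := by
  have h := aux_laplace_lint (c := a - 1) (b := x) (by linarith) hx
  rw [sub_add_cancel] at h
  rw [h, ENNReal.ofReal_mul (by positivity), ← mul_assoc, mul_comm _ (ENNReal.ofReal (x ^ (-a))),
    mul_assoc, ENNReal.inv_mul_cancel, mul_one]
  · simpa using Real.Gamma_pos_of_pos ha
  · exact ENNReal.ofReal_ne_top

/-- For `0 < σ < 1` there is a constant `C > 0`, depending only on `σ`, such that for all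
`α, β ≥ -1/2` and all `0 < s ≤ 2`,
`∫_0^1 sinh(t/2) (cosh(t/2) - 1 + s)^{-(α+β+2)} t^{σ-1} dt
  ≤ C (Γ(σ/2+1/2) Γ(α+β+3/2-σ/2)/Γ(α+β+2)) s^{-(α+β+3/2-σ/2)}`. -/
theorem lintegral_Ioo_zero_one_sinh_le (σ : ℝ) (hσ0 : 0 < σ) (hσ1 : σ < 1) :
    ∃ C : ℝ, 0 < C ∧ ∀ α β s : ℝ, -(1/2) ≤ α → -(1/2) ≤ β → 0 < s → s ≤ 2 →
      (∫⁻ t in Ioo (0:ℝ) 1, ENNReal.ofReal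
          (Real.sinh (t/2) * (Real.cosh (t/2) - 1 + s) ^ (-(α + β + 2)) * t ^ (σ - 1))) ≤
        ENNReal.ofReal (C * (Real.Gamma (σ/2 + 1/2) * Real.Gamma (α + β + 3/2 - σ/2) /
          Real.Gamma (α + β + 2)) * s ^ (-(α + β + 3/2 - σ/2))) := by
  refine ⟨8 ^ (σ/2 + 1/2) / 2, by positivity, fun α β s hα hβ hs0 hs2 => ?_⟩
  have hq_eq : α + β + 3/2 - σ/2 = (α + β + 2) - (σ/2 + 1/2) := by ring
  rw [hq_eq]
  set a : ℝ := α + β + 2 with ha_def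
  have ha1 : (1:ℝ) ≤ a := by rw [ha_def]; linarith
  have ha0 : (0:ℝ) < a := by linarith
  have hΓa : 0 < Real.Gamma a := Real.Gamma_pos_of_pos ha0
  have hp0 : (0:ℝ) < σ/2 + 1/2 := by linarith
  have hp1 : σ/2 + 1/2 < 1 := by linarith
  have hq0 : (0:ℝ) < a - (σ/2 + 1/2) := by linarith
  set K : ℝ := 8 ^ (σ/2 + 1/2) * (1/2) * Real.Gamma (σ/2 + 1/2) with hK_def
  have hmeas : AEMeasurable (Function.uncurry fun (t u : ℝ) =>
      ENNReal.ofReal (t ^ σ * (u ^ (a-1) * Real.exp (-(t^2/8 + s) * u))))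
      ((volume.restrict (Ioo (0:ℝ) 1)).prod (volume.restrict (Ioi (0:ℝ)))) := by
    apply Measurable.aemeasurable
    apply Measurable.ennreal_ofReal
    fun_prop
  calc
    (∫⁻ t in Ioo (0:ℝ) 1, ENNReal.ofReal
        (Real.sinh (t/2) * (Real.cosh (t/2) - 1 + s) ^ (-a) * t ^ (σ - 1)))
      ≤ ∫⁻ t in Ioo (0:ℝ) 1, (ENNReal.ofReal (Real.Gamma a))⁻¹ *
          ∫⁻ u in Ioi (0:ℝ), ENNReal.ofReal (t ^ σ * (u ^ (a-1) * Real.exp (-(t^2/8 + s) * u))) := by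
        refine lintegral_mono_ae ?_
        filter_upwards [ae_restrict_mem measurableSet_Ioo] with t ht
        have ht0 : (0:ℝ) < t := ht.1
        have hx : (0:ℝ) < t^2/8 + s := by positivity
        calc ENNReal.ofReal (Real.sinh (t/2) * (Real.cosh (t/2) - 1 + s) ^ (-a) * t ^ (σ - 1))
            ≤ ENNReal.ofReal (t ^ σ * (t^2/8 + s) ^ (-a)) := by
              apply ENNReal.ofReal_le_ofReal
              have h1 : Real.sinh (t/2) ≤ t := aux_sinh_le ht0.le ht.2.le
              have h2 : (Real.cosh (t/2) - 1 + s) ^ (-a) ≤ (t^2/8 + s) ^ (-a) :=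
                Real.rpow_le_rpow_of_nonpos hx
                  (by have := aux_cosh_ge ht0.le; linarith) (by linarith)
              have h3 : t ^ σ * (t^2/8 + s) ^ (-a)
                  = t * (t^2/8 + s) ^ (-a) * t ^ (σ-1) := by
                rw [show σ = 1 + (σ-1) by ring, Real.rpow_add ht0, Real.rpow_one]
                ring_nf
              rw [h3]
              have hnn : (0:ℝ) ≤ t ^ (σ-1) := Real.rpow_nonneg ht0.le _
              have hs1 : (0:ℝ) ≤ Real.sinh (t/2) := (Real.sinh_pos_iff.mpr (by linarith)).le
              have hc0 : (0:ℝ) ≤ (Real.cosh (t/2) - 1 + s) ^ (-a) :=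
                Real.rpow_nonneg (by nlinarith [Real.one_le_cosh (t/2)]) _
              exact mul_le_mul_of_nonneg_right (mul_le_mul h1 h2 hc0 ht0.le) hnn
          _ = (ENNReal.ofReal (Real.Gamma a))⁻¹ *
              ∫⁻ u in Ioi (0:ℝ), ENNReal.ofReal (t ^ σ * (u ^ (a-1) * Real.exp (-(t^2/8 + s) * u))) := by
              rw [ENNReal.ofReal_mul (Real.rpow_nonneg ht0.le σ), aux_rep ha0 hx,
                ← mul_assoc, mul_comm (ENNReal.ofReal (t ^ σ)) _, mul_assoc]
              congr 1
              rw [← lintegral_const_mul' _ _ ENNReal.ofReal_ne_top]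
              refine lintegral_congr_ae ?_
              filter_upwards [ae_restrict_mem measurableSet_Ioi] with u hu
              rw [← ENNReal.ofReal_mul (Real.rpow_nonneg ht0.le σ)]
    _ = (ENNReal.ofReal (Real.Gamma a))⁻¹ * ∫⁻ t in Ioo (0:ℝ) 1,
          ∫⁻ u in Ioi (0:ℝ), ENNReal.ofReal (t ^ σ * (u ^ (a-1) * Real.exp (-(t^2/8 + s) * u))) :=
        lintegral_const_mul' _ _ (by simp [ENNReal.inv_ne_top]; positivity)
    _ = (ENNReal.ofReal (Real.Gamma a))⁻¹ * ∫⁻ u in Ioi (0:ℝ),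
          ∫⁻ t in Ioo (0:ℝ) 1, ENNReal.ofReal (t ^ σ * (u ^ (a-1) * Real.exp (-(t^2/8 + s) * u))) := by
        rw [lintegral_lintegral_swap hmeas]
    _ ≤ (ENNReal.ofReal (Real.Gamma a))⁻¹ * ∫⁻ u in Ioi (0:ℝ),
          ENNReal.ofReal K * ENNReal.ofReal (u ^ (a - (σ/2+1/2) - 1) * Real.exp (-s * u)) := by
        refine mul_le_mul_right (lintegral_mono_ae ?_) _
        filter_upwards [ae_restrict_mem measurableSet_Ioi] with u hu
        have hu0 : (0:ℝ) < u := hu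
        calc ∫⁻ t in Ioo (0:ℝ) 1, ENNReal.ofReal (t ^ σ * (u ^ (a-1) * Real.exp (-(t^2/8 + s) * u)))
            = ∫⁻ t in Ioo (0:ℝ) 1, ENNReal.ofReal (u ^ (a-1) * Real.exp (-s * u)) *
                ENNReal.ofReal (t ^ σ * Real.exp (-(u/8) * t^2)) := by
              refine lintegral_congr fun t => ?_
              rw [← ENNReal.ofReal_mul (by positivity)]
              congr 1
              rw [show -(t^2/8 + s) * u = -s*u + -(u/8)*t^2 by ring, Real.exp_add]
              ring
          _ = ENNReal.ofReal (u ^ (a-1) * Real.exp (-s * u)) *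
                ∫⁻ t in Ioo (0:ℝ) 1, ENNReal.ofReal (t ^ σ * Real.exp (-(u/8) * t^2)) :=
              lintegral_const_mul' _ _ ENNReal.ofReal_ne_top
          _ ≤ ENNReal.ofReal (u ^ (a-1) * Real.exp (-s * u)) *
                ∫⁻ t in Ioi (0:ℝ), ENNReal.ofReal (t ^ σ * Real.exp (-(u/8) * t^2)) :=
              mul_le_mul_right (lintegral_mono_set Ioo_subset_Ioi_self) _
          _ = ENNReal.ofReal (u ^ (a-1) * Real.exp (-s * u)) *
                ENNReal.ofReal ((u/8) ^ (-(σ+1)/2) * (1/2) * Real.Gamma ((σ+1)/2)) := by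
              rw [aux_gauss_lint (by linarith) (by positivity)]
          _ = ENNReal.ofReal K * ENNReal.ofReal (u ^ (a - (σ/2+1/2) - 1) * Real.exp (-s * u)) := by
              rw [← ENNReal.ofReal_mul (by positivity), ← ENNReal.ofReal_mul (by positivity)]
              congr 1
              have h8 : (u/8) ^ (-(σ+1)/2) = u ^ (-(σ/2+1/2)) * (8:ℝ) ^ (σ/2+1/2) := by
                rw [show (-(σ+1)/2 : ℝ) = -(σ/2+1/2) by ring,
                  Real.div_rpow hu0.le (by norm_num : (0:ℝ) ≤ 8),
                  Real.rpow_neg (by norm_num : (0:ℝ) ≤ 8)]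
                field_simp
              rw [h8, show (σ+1)/2 = σ/2+1/2 by ring, hK_def]
              rw [show u ^ (a - (σ/2+1/2) - 1) = u ^ (a-1) * u ^ (-(σ/2+1/2)) by
                rw [← Real.rpow_add hu0]; ring_nf]
              ring
    _ = (ENNReal.ofReal (Real.Gamma a))⁻¹ * (ENNReal.ofReal K *
          ENNReal.ofReal (s ^ (-(a - (σ/2+1/2))) * Real.Gamma (a - (σ/2+1/2)))) := by
        rw [lintegral_const_mul' _ _ ENNReal.ofReal_ne_top]
        have h := aux_laplace_lint (c := a - (σ/2+1/2) - 1) (b := s) (by linarith) hs0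
        rw [sub_add_cancel] at h
        rw [h]
    _ = ENNReal.ofReal (8 ^ (σ/2 + 1/2) / 2 * (Real.Gamma (σ/2 + 1/2) *
          Real.Gamma (a - (σ/2+1/2)) / Real.Gamma a) * s ^ (-(a - (σ/2+1/2)))) := by
        rw [← ENNReal.ofReal_mul (by positivity)]
        rw [show (8:ℝ) ^ (σ/2 + 1/2) / 2 * (Real.Gamma (σ/2 + 1/2) *
            Real.Gamma (a - (σ/2+1/2)) / Real.Gamma a) * s ^ (-(a - (σ/2+1/2)))
          = (K * (s ^ (-(a - (σ/2+1/2))) * Real.Gamma (a - (σ/2+1/2)))) / Real.Gamma a by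
            rw [hK_def]; field_simp]
        rw [ENNReal.ofReal_div_of_pos hΓa, ENNReal.div_eq_inv_mul]
end

section
/- Let 0 < σ < 1 and let θ, φ ∈ (0,π) with θ ≠ φ. Then log( (1 − sin(θ/2) sin(φ/2)) / (1 − sin(θ/2) sin(φ/2) − cos(θ/2) cos(φ/2)) ) ≤ 2^{(1+σ)/2} / ( (1−σ) · |sin((θ−φ)/4)|^{1−σ} ). -/
open Real Set

/-- For `0 < σ < 1` and `θ ≠ φ` in `(0,π)`,
`log((1 - sin(θ/2)sin(φ/2))/(1 - sin(θ/2)sin(φ/2) - cos(θ/2)cos(φ/2)))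
  ≤ 2^{(1+σ)/2}/((1-σ) |sin((θ-φ)/4)|^{1-σ})`. -/
theorem log_bound_by_sin_quarter (σ θ φ : ℝ) (hσ0 : 0 < σ) (hσ1 : σ < 1)
    (hθ : θ ∈ Ioo (0:ℝ) π) (hφ : φ ∈ Ioo (0:ℝ) π) (hne : θ ≠ φ) :
    Real.log ((1 - Real.sin (θ/2) * Real.sin (φ/2)) /
        (1 - Real.sin (θ/2) * Real.sin (φ/2) - Real.cos (θ/2) * Real.cos (φ/2))) ≤
      (2:ℝ) ^ ((1 + σ)/2) / ((1 - σ) * |Real.sin ((θ - φ)/4)| ^ (1 - σ)) := by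
  obtain ⟨hθ0, hθπ⟩ := hθ
  obtain ⟨hφ0, hφπ⟩ := hφ
  have hπ := Real.pi_pos
  set s : ℝ := (θ - φ)/4 with hs
  have hsne : s ≠ 0 := by
    intro h
    apply hne
    have : θ - φ = 0 := by
      have := h
      rw [hs] at this
      linarith
    linarith
  have hsin_ne : Real.sin s ≠ 0 := by
    intro h
    have h1 : -π < s := by rw [hs]; linarith
    have h2 : s < π := by rw [hs]; linarith
    exact hsne ((Real.sin_eq_zero_iff_of_lt_of_lt h1 h2).mp h)
  set a : ℝ := |Real.sin s| with ha
  have ha0 : 0 < a := abs_pos.mpr hsin_ne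
  -- denominator equals 2 * a^2
  have hD : 1 - Real.sin (θ/2) * Real.sin (φ/2) - Real.cos (θ/2) * Real.cos (φ/2)
      = 2 * a ^ 2 := by
    have h1 : Real.cos (θ/2 - φ/2)
        = Real.cos (θ/2) * Real.cos (φ/2) + Real.sin (θ/2) * Real.sin (φ/2) :=
      Real.cos_sub _ _
    have h3 : θ/2 - φ/2 = 2 * s := by rw [hs]; ring
    have h2 : Real.cos (θ/2 - φ/2) = 1 - 2 * Real.sin s ^ 2 := by
      rw [h3, Real.cos_two_mul]
      nlinarith [Real.sin_sq_add_cos_sq s]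
    have h4 : a ^ 2 = Real.sin s ^ 2 := sq_abs _
    rw [h4]
    linarith [h1.symm.trans h2]
  have hDpos : 0 < 2 * a ^ 2 := by positivity
  set N : ℝ := 1 - Real.sin (θ/2) * Real.sin (φ/2) with hN
  have hsθ : 0 < Real.sin (θ/2) := Real.sin_pos_of_pos_of_lt_pi (by linarith) (by linarith)
  have hsφ : 0 < Real.sin (φ/2) := Real.sin_pos_of_pos_of_lt_pi (by linarith) (by linarith)
  have hN1 : N ≤ 1 := by
    rw [hN]; nlinarith
  have hcθ : 0 ≤ Real.cos (θ/2) := Real.cos_nonneg_of_mem_Icc ⟨by linarith, by linarith⟩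
  have hcφ : 0 ≤ Real.cos (φ/2) := Real.cos_nonneg_of_mem_Icc ⟨by linarith, by linarith⟩
  have hNpos : 0 < N := by
    have : N - (2 * a ^ 2) = Real.cos (θ/2) * Real.cos (φ/2) := by
      rw [hN, ← hD]; ring
    clear_value N a s
    linarith [mul_nonneg hcθ hcφ, this, hDpos]
  rw [hD]
  have step1 : Real.log (N / (2 * a ^ 2)) ≤ Real.log (1 / (2 * a ^ 2)) := by
    apply Real.log_le_log (by positivity)
    gcongr
  set ε : ℝ := (1 - σ)/2 with hε
  have hε0 : 0 < ε := by rw [hε]; linarith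
  have step2 : Real.log (1 / (2 * a ^ 2)) ≤ (1 / (2 * a ^ 2)) ^ ε / ε :=
    Real.log_le_rpow_div (by positivity) hε0
  have key : (1 / (2 * a ^ 2)) ^ ε / ε = (2:ℝ) ^ ((1 + σ)/2) / ((1 - σ) * a ^ (1 - σ)) := by
    have h1 : ((2:ℝ) * a ^ 2) ^ ε = 2 ^ ε * a ^ (1 - σ) := by
      rw [Real.mul_rpow (by norm_num) (by positivity)]
      congr 1
      rw [← Real.rpow_natCast a 2, ← Real.rpow_mul ha0.le]
      congr 1
      rw [hε]; push_cast; ring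
    rw [one_div, ← Real.rpow_neg_one ((2:ℝ) * a ^ 2)]
    rw [← Real.rpow_mul hDpos.le, neg_one_mul, Real.rpow_neg hDpos.le, h1]
    have h2 : (2:ℝ) ^ ((1 + σ)/2) * 2 ^ ε = 2 := by
      rw [← Real.rpow_add (by norm_num)]
      have : (1 + σ)/2 + ε = 1 := by rw [hε]; ring
      rw [this, Real.rpow_one]
    have h2pos : (0:ℝ) < 2 ^ ε := Real.rpow_pos_of_pos (by norm_num) _
    have hapos : (0:ℝ) < a ^ (1 - σ) := Real.rpow_pos_of_pos ha0 _
    field_simp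
    rw [eq_div_iff (ne_of_gt (by linarith : (0:ℝ) < 1 - σ))]
    rw [hε] at h2 ⊢
    linear_combination (-((1 - σ)/2)) * h2
  calc Real.log (N / (2 * a ^ 2)) ≤ (1 / (2 * a ^ 2)) ^ ε / ε := le_trans step1 step2
    _ = _ := key
end
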